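/- arXiv:2512.07096 — 4 statements merged into one kernel-verified Lean document; each statement's English description precedes it below -/
import Mathlib

section
/- For the velocity field v of the unit-square vortex patch, there is a constant C > 0 such that for all x, y in R^2 both lying outside the concentric triple 3Q_0 of the unit square, |v(x) - v(y)| ≤ C|x-y| / ((1+|x|)(1+|y|)). -/
open MeasureTheory Real Filter

noncomputable section

abbrev E2 := EuclideanSpace ℝ (Fin 2)

/-- The Biot–Savart kernel `K(z) = z^⊥ / (2π |z|^2)`. -/
def K (z : E2) : E2 := (1 / (2 * Real.pi * ‖z‖ ^ 2)) • (WithLp.toLp 2 ![-(z 1), z 0] : E2)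

/-- The unit square `Q_0 = [0,1)^2`. -/
def Q0 : Set E2 := {y | y 0 ∈ Set.Ico (0 : ℝ) 1 ∧ y 1 ∈ Set.Ico (0 : ℝ) 1}

/-- The concentric triple `3Q_0` of the unit square (side 3, same center). -/
def threeQ0 : Set E2 := {y | y 0 ∈ Set.Icc (-1 : ℝ) 2 ∧ y 1 ∈ Set.Icc (-1 : ℝ) 2}

/-- The velocity field of the unit-square vortex patch. -/
def v (x : E2) : E2 := ∫ y in Q0, K (x - y)

/-- Embedding of the lattice `ℤ²` into the plane. -/
def latt (n : ℤ × ℤ) : E2 := (WithLp.toLp 2 ![(n.1 : ℝ), (n.2 : ℝ)] : E2)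

/-- `ln⁻ t = -min{0, ln t} = max{0, -ln t}`. -/
def lnNeg (t : ℝ) : ℝ := max 0 (-Real.log t)

end

noncomputable section Aux

def perp (z : E2) : E2 := (WithLp.toLp 2 ![-(z 1), z 0] : E2)

lemma K_eq (z : E2) : K z = (1 / (2 * Real.pi * ‖z‖ ^ 2)) • perp z := rfl

lemma norm_perp (z : E2) : ‖perp z‖ = ‖z‖ := by
  rw [EuclideanSpace.norm_eq, EuclideanSpace.norm_eq]
  simp [perp, Fin.sum_univ_two]
  ring_nf

set_option linter.unnecessarySeqFocus false in
lemma perp_sub (a b : E2) : perp (a - b) = perp a - perp b := by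
  ext i
  fin_cases i <;> simp [perp] <;> ring_nf

lemma Kdiff (a b : E2) (ha : 0 < ‖a‖) (hb : 0 < ‖b‖) :
    ‖K a - K b‖ ≤ ‖a - b‖ * (2 / ‖a‖ ^ 2 + 1 / (‖a‖ * ‖b‖)) := by
  set A := ‖a‖
  set B := ‖b‖
  have key : K a - K b
      = (1 / (2 * Real.pi * A ^ 2 * B ^ 2)) • (B ^ 2 • perp (a - b) + (B ^ 2 - A ^ 2) • perp b) := by
    have hA : A ≠ 0 := ne_of_gt ha
    have hB : B ≠ 0 := ne_of_gt hb
    have hp : Real.pi ≠ 0 := Real.pi_ne_zero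
    rw [K_eq, K_eq, perp_sub, show ‖a‖ = A from rfl, show ‖b‖ = B from rfl]
    match_scalars <;> field_simp <;> ring
  rw [key]
  have h1 : ‖(1 / (2 * Real.pi * A ^ 2 * B ^ 2)) • (B ^ 2 • perp (a - b) + (B ^ 2 - A ^ 2) • perp b)‖
      ≤ (1 / (A ^ 2 * B ^ 2)) * (B ^ 2 * ‖a - b‖ + (A + B) * ‖a - b‖ * B) := by
    rw [norm_smul]
    have hmul : ‖B ^ 2 • perp (a - b) + (B ^ 2 - A ^ 2) • perp b‖
        ≤ B ^ 2 * ‖a - b‖ + (A + B) * ‖a - b‖ * B := by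
      refine (norm_add_le _ _).trans ?_
      rw [norm_smul, norm_smul, norm_perp, norm_perp]
      have habs : |B ^ 2 - A ^ 2| ≤ (A + B) * ‖a - b‖ := by
        have h2 : |B - A| ≤ ‖a - b‖ := by
          rw [abs_sub_comm]; exact abs_norm_sub_norm_le a b
        calc |B ^ 2 - A ^ 2| = |B + A| * |B - A| := by rw [← abs_mul]; ring_nf
          _ ≤ (A + B) * ‖a - b‖ := by
              apply mul_le_mul _ h2 (abs_nonneg _) (by positivity)
              rw [abs_of_nonneg (by positivity)]; linarith
      gcongr
      · simp [abs_of_nonneg (sq_nonneg B)]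
      · exact habs
    have hsc : ‖(1 / (2 * Real.pi * A ^ 2 * B ^ 2))‖ ≤ 1 / (A ^ 2 * B ^ 2) := by
      rw [Real.norm_eq_abs, abs_of_nonneg (by positivity)]
      rw [div_le_div_iff₀ (by positivity) (by positivity)]
      nlinarith [Real.pi_gt_three, sq_nonneg (A*B)]
    calc _ ≤ (1 / (A ^ 2 * B ^ 2)) * (B ^ 2 * ‖a - b‖ + (A + B) * ‖a - b‖ * B) := by
            apply mul_le_mul hsc hmul (norm_nonneg _) (by positivity)
      _ = _ := rfl
  refine h1.trans (le_of_eq ?_)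
  have hA : A ≠ 0 := ne_of_gt ha
  have hB : B ≠ 0 := ne_of_gt hb
  field_simp
  ring

def Sq : Set E2 := {y | y 0 ∈ Set.Icc (0 : ℝ) 1 ∧ y 1 ∈ Set.Icc (0 : ℝ) 1}

lemma Q0_subset_Sq : Q0 ⊆ Sq := fun y hy =>
  ⟨⟨hy.1.1, le_of_lt hy.1.2⟩, ⟨hy.2.1, le_of_lt hy.2.2⟩⟩

lemma continuous_coord (i : Fin 2) : Continuous (fun y : E2 => y i) :=
  (EuclideanSpace.proj i).continuous

lemma continuous_perp : Continuous perp := by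
  have h : Continuous (fun z : E2 => (![-(z 1), z 0] : Fin 2 → ℝ)) := by
    apply continuous_pi
    intro i
    fin_cases i
    · exact (continuous_coord 1).neg
    · simpa using (EuclideanSpace.proj (0 : Fin 2)).continuous
  exact (PiLp.continuous_toLp 2 (fun _ : Fin 2 => ℝ)).comp h

lemma coord_le_norm (z : E2) (i : Fin 2) : |z i| ≤ ‖z‖ := by
  rw [EuclideanSpace.norm_eq, Fin.sum_univ_two, ← Real.sqrt_sq_eq_abs]
  apply Real.sqrt_le_sqrt
  fin_cases i <;> simp <;> positivity

lemma norm_le_two' (w : E2) (h : w ∈ Sq) : ‖w‖ ≤ 2 := by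
  rw [EuclideanSpace.norm_eq, Fin.sum_univ_two]
  simp only [Real.norm_eq_abs, sq_abs]
  have hs : √((w 0)^2 + (w 1)^2) ≤ √(2^2) := by
    apply Real.sqrt_le_sqrt; nlinarith [h.1.1, h.1.2, h.2.1, h.2.2]
  rwa [Real.sqrt_sq (by norm_num)] at hs

lemma far (x w : E2) (hx : x ∉ threeQ0) (hw : w ∈ Sq) : (1 + ‖x‖) / 6 ≤ ‖x - w‖ := by
  obtain ⟨h0, h1⟩ := hw
  have hone : (1:ℝ) ≤ ‖x - w‖ := by
    simp only [threeQ0, Set.mem_setOf_eq, Set.mem_Icc, not_and_or, not_le] at hx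
    have c0 := coord_le_norm (x - w) 0
    have c1 := coord_le_norm (x - w) 1
    have e0 : (x - w) 0 = x 0 - w 0 := rfl
    have e1 : (x - w) 1 = x 1 - w 1 := rfl
    rw [e0] at c0; rw [e1] at c1
    rcases hx with (h | h) | (h | h)
    · nlinarith [neg_abs_le (x 0 - w 0), h0.1]
    · nlinarith [le_abs_self (x 0 - w 0), h0.2]
    · nlinarith [neg_abs_le (x 1 - w 1), h1.1]
    · nlinarith [le_abs_self (x 1 - w 1), h1.2]
  have htri : ‖x‖ - 2 ≤ ‖x - w‖ := by
    have ht1 := norm_sub_norm_le x w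
    have ht2 := norm_le_two' w ⟨h0, h1⟩
    linarith
  rcases le_or_gt ‖x‖ 5 with h | h
  · linarith
  · linarith

lemma isCompact_Sq : IsCompact Sq := by
  apply Metric.isCompact_of_isClosed_isBounded
  · have : Sq = (fun y : E2 => y 0) ⁻¹' Set.Icc 0 1 ∩ (fun y : E2 => y 1) ⁻¹' Set.Icc 0 1 := rfl
    rw [this]
    exact ((isClosed_Icc.preimage (continuous_coord 0)).inter
      (isClosed_Icc.preimage (continuous_coord 1)))
  · rw [Metric.isBounded_iff_subset_closedBall 0]
    exact ⟨2, fun y hy => by simpa [Metric.mem_closedBall] using norm_le_two' y hy⟩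

lemma integrableK (x : E2) (hx : x ∉ threeQ0) :
    IntegrableOn (fun w => K (x - w)) Q0 volume := by
  apply IntegrableOn.mono_set _ Q0_subset_Sq
  apply ContinuousOn.integrableOn_compact isCompact_Sq
  intro w hw
  have hpos : 0 < ‖x - w‖ := lt_of_lt_of_le (by positivity) (far x w hx hw)
  have hne : ‖x - w‖ ≠ 0 := ne_of_gt hpos
  show ContinuousWithinAt (fun w => (1 / (2 * Real.pi * ‖x - w‖ ^ 2)) • perp (x - w)) Sq w
  apply ContinuousWithinAt.fun_smul
  · apply ContinuousWithinAt.div continuousWithinAt_const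
    · exact ((continuous_norm.comp (continuous_const.sub continuous_id)).pow 2).continuousWithinAt.const_mul _
    · positivity
  · exact (continuous_perp.comp (continuous_const.sub continuous_id)).continuousWithinAt

lemma volume_Q0 : volume Q0 = 1 := by
  have h := (EuclideanSpace.volume_preserving_symm_measurableEquiv_toLp (ι := Fin 2)).measure_preimage
    (s := Set.univ.pi fun _ : Fin 2 => Set.Ico (0:ℝ) 1)
    ((MeasurableSet.univ_pi fun _ => measurableSet_Ico).nullMeasurableSet)
  have hQ : Q0 = (MeasurableEquiv.toLp 2 (Fin 2 → ℝ)).symm ⁻¹' (Set.univ.pi fun _ : Fin 2 => Set.Ico (0:ℝ) 1) := by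
    ext y
    simp [Q0, Set.mem_pi, Fin.forall_fin_two]
  rw [hQ, h, volume_pi_pi]
  simp

lemma main_aux (x y : E2) (hx : x ∉ threeQ0) (hy : y ∉ threeQ0) (hle : ‖y‖ ≤ ‖x‖) :
    ‖v x - v y‖ ≤ 108 * ‖x - y‖ / ((1 + ‖x‖) * (1 + ‖y‖)) := by
  have hix := integrableK x hx
  have hiy := integrableK y hy
  have hsplit : v x - v y = ∫ w in Q0, (K (x - w) - K (y - w)) := by
    rw [v, v, ← integral_sub hix hiy]
  set u := 1 + ‖x‖ with hu
  set t := 1 + ‖y‖ with ht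
  have hu1 : (1:ℝ) ≤ u := by simp [hu, norm_nonneg]
  have ht1 : (1:ℝ) ≤ t := by simp [ht, norm_nonneg]
  have htu : t ≤ u := by simp only [hu, ht]; linarith
  set M := 108 * ‖x - y‖ / (u * t) with hM
  have hpoint : ∀ w ∈ Q0, ‖K (x - w) - K (y - w)‖ ≤ M := by
    intro w hw
    have hwS := Q0_subset_Sq hw
    have ha : u / 6 ≤ ‖x - w‖ := far x w hx hwS
    have hb : t / 6 ≤ ‖y - w‖ := far y w hy hwS
    have hA : 0 < ‖x - w‖ := lt_of_lt_of_le (by positivity) ha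
    have hB : 0 < ‖y - w‖ := lt_of_lt_of_le (by positivity) hb
    have hKd := Kdiff (x - w) (y - w) hA hB
    have hab : x - w - (y - w) = x - y := by abel
    rw [hab] at hKd
    refine hKd.trans ?_
    rw [hM]
    have hb1 : 2 / ‖x - w‖ ^ 2 ≤ 72 / (u * t) := by
      rw [div_le_div_iff₀ (by positivity) (by positivity)]
      nlinarith [sq_nonneg (‖x - w‖ - u/6)]
    have hb2 : 1 / (‖x - w‖ * ‖y - w‖) ≤ 36 / (u * t) := by
      rw [div_le_div_iff₀ (by positivity) (by positivity)]
      nlinarith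
    calc ‖x - y‖ * (2 / ‖x - w‖ ^ 2 + 1 / (‖x - w‖ * ‖y - w‖))
        ≤ ‖x - y‖ * (72 / (u * t) + 36 / (u * t)) := by
          apply mul_le_mul_of_nonneg_left (by linarith) (norm_nonneg _)
      _ = 108 * ‖x - y‖ / (u * t) := by ring
  have hmeas : AEStronglyMeasurable (fun w => K (x - w) - K (y - w)) (volume.restrict Q0) :=
    (hix.sub hiy).aestronglyMeasurable
  have hfin : volume Q0 < ⊤ := by rw [volume_Q0]; exact ENNReal.one_lt_top
  have := norm_setIntegral_le_of_norm_le_const hfin hpoint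
  rw [hsplit]
  refine this.trans ?_
  rw [measureReal_def, volume_Q0]
  simp [hM]

end Aux

theorem vortex_patch_lipschitz_far :
    ∃ C : ℝ, 0 < C ∧ ∀ x y : E2, x ∉ threeQ0 → y ∉ threeQ0 →
      ‖v x - v y‖ ≤ C * ‖x - y‖ / ((1 + ‖x‖) * (1 + ‖y‖)) := by
  refine ⟨108, by norm_num, fun x y hx hy => ?_⟩
  rcases le_total ‖y‖ ‖x‖ with h | h
  · exact main_aux x y hx hy h
  · have := main_aux y x hy hx h
    rw [norm_sub_rev, norm_sub_rev x y, mul_comm (1 + ‖x‖)]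
    exact this
end

section
/- For the velocity field v of the unit-square vortex patch, there is a constant C > 0 such that for all x ∈ 3Q_0 and y ∉ 3Q_0, |v(x) - v(y)| ≤ C|x-y|/(1+|y|), and hence |v(x)-v(y)| ≤ C'|x-y|/((1+|x|)(1+|y|)) since |x| is bounded on 3Q_0. -/
open MeasureTheory Real Filter

noncomputable section Aux

lemma norm_sq_E2 (u : E2) : ‖u‖ ^ 2 = (u 0) ^ 2 + (u 1) ^ 2 := by
  rw [EuclideanSpace.norm_eq, Real.sq_sqrt (by positivity)]
  simp [Fin.sum_univ_two, sq_abs]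

lemma abs_coord_le_norm (u : E2) (i : Fin 2) : |u i| ≤ ‖u‖ := by
  rw [EuclideanSpace.norm_eq, ← Real.sqrt_sq_eq_abs]
  apply Real.sqrt_le_sqrt
  fin_cases i <;> simp [Fin.sum_univ_two, sq_abs] <;> positivity

lemma norm_le_abs_add (u : E2) : ‖u‖ ≤ |u 0| + |u 1| := by
  rw [EuclideanSpace.norm_eq]
  rw [show ∑ i, ‖u i‖ ^ 2 = |u 0|^2 + |u 1|^2 by simp [Fin.sum_univ_two, sq_abs]]
  rw [show (|u 0| + |u 1|) = Real.sqrt ((|u 0| + |u 1|)^2) by rw [Real.sqrt_sq (by positivity)]]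
  apply Real.sqrt_le_sqrt; nlinarith [abs_nonneg (u 0), abs_nonneg (u 1)]

lemma norm_K (z : E2) : ‖K z‖ = ‖z‖ / (2 * π * ‖z‖ ^ 2) := by
  have key : ∀ u : E2, u 0 = -(z 1) → u 1 = z 0 → ‖u‖ = ‖z‖ := by
    intro u h0 h1
    rw [← Real.sqrt_sq (norm_nonneg u), ← Real.sqrt_sq (norm_nonneg z), norm_sq_E2, norm_sq_E2,
      h0, h1]
    ring_nf
  rw [K, norm_smul, key (WithLp.toLp 2 (![-(z 1), z 0] : Fin 2 → ℝ) : E2) rfl rfl, Real.norm_eq_abs,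
    abs_of_nonneg (by positivity), one_div, div_eq_inv_mul]

lemma norm_K_le {z : E2} {c : ℝ} (hc : 0 < c) (hcz : c ≤ ‖z‖) : ‖K z‖ ≤ 1 / (2 * π * c) := by
  have hz : 0 < ‖z‖ := lt_of_lt_of_le hc hcz
  rw [norm_K, div_le_div_iff₀ (by positivity) (by positivity)]
  nlinarith [Real.pi_pos, mul_le_mul_of_nonneg_left hcz (by positivity : (0:ℝ) ≤ 2 * π * ‖z‖)]

lemma measurable_K : Measurable K := by
  show Measurable fun z : E2 => (1 / (2 * Real.pi * ‖z‖ ^ 2)) • (WithLp.toLp 2 ![-(z 1), z 0] : E2)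
  refine Measurable.smul (f := fun z : E2 => 1 / (2 * Real.pi * ‖z‖ ^ 2))
    (g := fun z : E2 => (WithLp.toLp 2 ![-(z 1), z 0] : E2)) ?_ ?_
  · exact measurable_const.div (((measurable_norm).pow_const 2).const_mul (2 * π))
  · refine (WithLp.measurable_toLp 2 (Fin 2 → ℝ)).comp (measurable_pi_iff.mpr ?_)
    intro i; fin_cases i
    · show Measurable fun z : E2 => -(z 1); exact ((measurable_pi_apply 1).comp (WithLp.measurable_ofLp 2 _)).neg
    · show Measurable fun z : E2 => z 0; exact (measurable_pi_apply 0).comp (WithLp.measurable_ofLp 2 _)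

lemma K_apply (z : E2) (i : Fin 2) :
    K z i = (1 / (2 * Real.pi * ‖z‖ ^ 2)) * (![-(z 1), z 0] : Fin 2 → ℝ) i := by simp [K]

lemma K_lip {a b : E2} (ha : a ≠ 0) (hb : b ≠ 0) :
    ‖K a - K b‖ ≤ ‖a - b‖ / (2 * π * (‖a‖ * ‖b‖)) := by
  have hna : 0 < ‖a‖ := norm_pos_iff.mpr ha
  have hnb : 0 < ‖b‖ := norm_pos_iff.mpr hb
  have ha2 : (0:ℝ) < a 0 ^ 2 + a 1 ^ 2 := by rw [← norm_sq_E2]; positivity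
  have hb2 : (0:ℝ) < b 0 ^ 2 + b 1 ^ 2 := by rw [← norm_sq_E2]; positivity
  have hπ : (0:ℝ) < π := Real.pi_pos
  have hsq : ‖K a - K b‖ ^ 2 = (‖a - b‖ / (2 * π * (‖a‖ * ‖b‖))) ^ 2 := by
    rw [div_pow, mul_pow, mul_pow, mul_pow, norm_sq_E2 (K a - K b), norm_sq_E2 (a - b)]
    simp only [PiLp.sub_apply, K_apply, Matrix.cons_val_zero, Matrix.cons_val_one,
      Matrix.head_cons]
    rw [norm_sq_E2 a, norm_sq_E2 b]
    field_simp
    ring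
  nlinarith [norm_nonneg (K a - K b), div_nonneg (norm_nonneg (a - b))
    (by positivity : (0:ℝ) ≤ 2 * π * (‖a‖ * ‖b‖)), hsq]

lemma volume_box {A B : Set ℝ} (hA : MeasurableSet A) (hB : MeasurableSet B) :
    volume {p : E2 | p 0 ∈ A ∧ p 1 ∈ B} = volume A * volume B := by
  have hmp := EuclideanSpace.volume_preserving_symm_measurableEquiv_toLp (Fin 2)
  have hS : MeasurableSet (Set.univ.pi ![A, B]) := by
    apply MeasurableSet.univ_pi
    intro i; fin_cases i <;> simpa
  have hset : {p : E2 | p 0 ∈ A ∧ p 1 ∈ B}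
      = (MeasurableEquiv.toLp 2 (Fin 2 → ℝ)).symm ⁻¹' (Set.univ.pi ![A, B]) := by
    ext p
    simp [Set.mem_pi, Fin.forall_fin_two]
  rw [hset, hmp.measure_preimage hS.nullMeasurableSet, volume_pi_pi]
  simp [Fin.prod_univ_two]

lemma measurableSet_Q0 : MeasurableSet Q0 :=
  MeasurableSet.inter (((measurable_pi_apply 0).comp (WithLp.measurable_ofLp 2 _)) measurableSet_Ico)
    (((measurable_pi_apply 1).comp (WithLp.measurable_ofLp 2 _)) measurableSet_Ico)

lemma volume_unit_ball_le : volume (Metric.ball (0:E2) 1) ≤ 4 := by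
  have hsub : Metric.ball (0:E2) 1
      ⊆ {p : E2 | p 0 ∈ Set.Icc (-1:ℝ) 1 ∧ p 1 ∈ Set.Icc (-1:ℝ) 1} := by
    intro p hp
    rw [Metric.mem_ball, dist_zero_right] at hp
    constructor <;> [have := abs_coord_le_norm p 0; have := abs_coord_le_norm p 1] <;>
      constructor <;> cases' abs_le.mp (this.trans hp.le) with h1 h2 <;> linarith
  calc volume (Metric.ball (0:E2) 1) ≤ _ := measure_mono hsub
    _ = 4 := by
      rw [volume_box measurableSet_Icc measurableSet_Icc]
      rw [Real.volume_Icc]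
      norm_num

lemma dyadic {r : ℝ} (hr : 0 < r) :
    ENNReal.ofReal r⁻¹ ≤ 1 + ∑' n : ℕ,
      (if r < (1/2:ℝ)^n then ((2:ENNReal)^(n+1)) else 0) := by
  classical
  by_cases hr1 : 1 ≤ r
  · refine le_trans ?_ le_self_add
    rw [show (1:ENNReal) = ENNReal.ofReal 1 by simp]
    exact ENNReal.ofReal_le_ofReal (by rw [← inv_one]; exact inv_anti₀ one_pos hr1)
  · push_neg at hr1
    have hex : ∃ n : ℕ, (1/2:ℝ)^(n+1) ≤ r := by
      obtain ⟨n, hn⟩ := exists_pow_lt_of_lt_one hr (by norm_num : (1/2:ℝ) < 1)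
      cases n with
      | zero => simp at hn; linarith
      | succ m => exact ⟨m, hn.le⟩
    set k := Nat.find hex with hk
    have hks : (1/2:ℝ)^(k+1) ≤ r := Nat.find_spec hex
    have hklt : r < (1/2:ℝ)^k := by
      cases' Nat.eq_zero_or_pos k with h h
      · rw [h]; simpa using hr1
      · have := Nat.find_min hex (m := k - 1) (by omega)
        push_neg at this
        calc r < (1/2:ℝ)^(k-1+1) := this
          _ = (1/2:ℝ)^k := by congr 1; omega
    have hterm : (2:ENNReal)^(k+1) ≤ ∑' n : ℕ,
        (if r < (1/2:ℝ)^n then ((2:ENNReal)^(n+1)) else 0) := by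
      have := ENNReal.le_tsum (f := fun n : ℕ =>
        (if r < (1/2:ℝ)^n then ((2:ENNReal)^(n+1)) else 0)) k
      rwa [if_pos hklt] at this
    refine le_trans ?_ (le_trans hterm le_add_self)
    have : r⁻¹ ≤ (2:ℝ)^(k+1) := by
      rw [inv_le_comm₀ hr (by positivity)]
      calc ((2:ℝ)^(k+1))⁻¹ = (1/2:ℝ)^(k+1) := by rw [← inv_pow]; norm_num
        _ ≤ r := hks
    calc ENNReal.ofReal r⁻¹ ≤ ENNReal.ofReal ((2:ℝ)^(k+1)) := ENNReal.ofReal_le_ofReal this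
      _ = (2:ENNReal)^(k+1) := by
        rw [ENNReal.ofReal_pow (by norm_num)]; norm_num

lemma key_lint (x : E2) : ∫⁻ w in Q0, ENNReal.ofReal ‖K (x - w)‖ ≤ 17 := by
  classical
  set g : E2 → ENNReal := fun w => 1 + ∑' n : ℕ,
    (Metric.ball x ((1/2:ℝ)^n)).indicator (fun _ => (2:ENNReal)^(n+1)) w with hg
  have hae : ∀ᵐ w ∂(volume.restrict Q0), ENNReal.ofReal ‖K (x - w)‖ ≤ g w := by
    have hsing : ∀ᵐ w : E2, w ≠ x := by
      rw [ae_iff]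
      have : {w : E2 | ¬ w ≠ x} = {x} := by ext w; simp
      rw [this]; exact measure_singleton x
    filter_upwards [ae_restrict_of_ae hsing] with w hw
    have hr : 0 < ‖x - w‖ := by
      rw [norm_pos_iff, sub_ne_zero]; exact fun h => hw h.symm
    have h1 : ENNReal.ofReal ‖K (x - w)‖ ≤ ENNReal.ofReal (‖x - w‖⁻¹) := by
      apply ENNReal.ofReal_le_ofReal
      rw [norm_K]
      have hinv : (‖x - w‖)⁻¹ = ‖x - w‖ / (1 * ‖x - w‖ ^ 2) := by
        field_simp
      rw [hinv]
      gcongr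
      nlinarith [Real.pi_gt_three]
    refine h1.trans ((dyadic hr).trans (le_of_eq ?_))
    rw [hg]
    congr 1
    apply tsum_congr
    intro n
    rw [Set.indicator_apply]
    exact (if_congr (by rw [Metric.mem_ball, dist_eq_norm, norm_sub_rev]) rfl rfl).symm
  calc ∫⁻ w in Q0, ENNReal.ofReal ‖K (x - w)‖ ≤ ∫⁻ w in Q0, g w := lintegral_mono_ae hae
    _ = volume Q0 + ∫⁻ w in Q0, ∑' n : ℕ,
        (Metric.ball x ((1/2:ℝ)^n)).indicator (fun _ => (2:ENNReal)^(n+1)) w := by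
      rw [hg, lintegral_add_left measurable_const, setLIntegral_const, one_mul]
    _ ≤ 1 + ∑' n : ℕ, (2:ENNReal)^(n+1)
        * (ENNReal.ofReal (((1/2:ℝ)^n)^2) * volume (Metric.ball (0:E2) 1)) := by
      rw [volume_Q0]
      gcongr 1 + ?_
      rw [lintegral_tsum (fun n => (measurable_const.indicator measurableSet_ball).aemeasurable)]
      gcongr with n
      rw [lintegral_indicator measurableSet_ball, setLIntegral_const,
        Measure.restrict_apply measurableSet_ball]
      calc (2:ENNReal)^(n+1) * volume (Metric.ball x ((1/2:ℝ)^n) ∩ Q0)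
          ≤ (2:ENNReal)^(n+1) * volume (Metric.ball x ((1/2:ℝ)^n)) := by
            gcongr; exact Set.inter_subset_left
        _ = (2:ENNReal)^(n+1)
            * (ENNReal.ofReal (((1/2:ℝ)^n)^2) * volume (Metric.ball (0:E2) 1)) := by
            rw [Measure.addHaar_ball _ _ (by positivity)]
            congr 2
            · rw [finrank_euclideanSpace]; simp
    _ ≤ 1 + ∑' n : ℕ, (8:ENNReal) * 2⁻¹^n := by
      refine add_le_add_right (ENNReal.tsum_le_tsum fun n => ?_) 1
      have hof : ENNReal.ofReal (((1/2:ℝ)^n)^2) = (2⁻¹ : ENNReal)^(2*n) := by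
        rw [← pow_mul, mul_comm n 2, ENNReal.ofReal_pow (by norm_num)]
        congr 1
        rw [one_div, ENNReal.ofReal_inv_of_pos (by norm_num)]
        norm_num
      rw [hof]
      calc (2:ENNReal)^(n+1) * ((2⁻¹:ENNReal)^(2*n) * volume (Metric.ball (0:E2) 1))
          ≤ (2:ENNReal)^(n+1) * ((2⁻¹:ENNReal)^(2*n) * 4) := by gcongr; exact volume_unit_ball_le
        _ = 8 * ((2 * 2⁻¹:ENNReal)^n * 2⁻¹^n) := by ring
        _ = 8 * 2⁻¹^n := by
            rw [ENNReal.mul_inv_cancel (by norm_num) (by norm_num), one_pow, one_mul]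
    _ = 1 + 8 * (1 - 2⁻¹)⁻¹ := by rw [ENNReal.tsum_mul_left, ENNReal.tsum_geometric]
    _ = 17 := by
      rw [ENNReal.one_sub_inv_two, inv_inv]
      norm_num

lemma norm_v_le (x : E2) : ‖v x‖ ≤ 17 := by
  rw [v]
  refine (norm_integral_le_lintegral_norm _).trans ?_
  calc (∫⁻ w in Q0, ENNReal.ofReal ‖K (x - w)‖).toReal ≤ (17:ENNReal).toReal :=
      ENNReal.toReal_mono (by norm_num) (key_lint x)
    _ = 17 := by norm_num

lemma norm_w_le {w : E2} (hw : w ∈ Q0) : ‖w‖ ≤ 2 := by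
  obtain ⟨h0, h1⟩ := hw
  refine (norm_le_abs_add w).trans ?_
  rw [abs_of_nonneg h0.1, abs_of_nonneg h1.1]
  have := h0.2; have := h1.2
  linarith

lemma norm_x_le {x : E2} (hx : x ∈ threeQ0) : ‖x‖ ≤ 4 := by
  obtain ⟨h0, h1⟩ := hx
  refine (norm_le_abs_add x).trans ?_
  have a0 : |x 0| ≤ 2 := abs_le.mpr ⟨by linarith [h0.1], h0.2⟩
  have a1 : |x 1| ≤ 2 := abs_le.mpr ⟨by linarith [h1.1], h1.2⟩
  linarith

lemma y_far {y : E2} (hy : y ∉ threeQ0) {w : E2} (hw : w ∈ Q0) :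
    1 ≤ ‖y - w‖ ∧ 1 + ‖y‖ ≤ 4 * ‖y - w‖ := by
  obtain ⟨hw0, hw1⟩ := hw
  have hy' : y 0 < -1 ∨ 2 < y 0 ∨ y 1 < -1 ∨ 2 < y 1 := by
    by_contra h
    push_neg at h
    exact hy ⟨Set.mem_Icc.mpr ⟨h.1, h.2.1⟩, Set.mem_Icc.mpr ⟨h.2.2.1, h.2.2.2⟩⟩
  have habs : ∃ i : Fin 2, 1 ≤ |y i - w i| := by
    obtain ⟨hl0, hr0⟩ := hw0; obtain ⟨hl1, hr1⟩ := hw1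
    rcases hy' with h | h | h | h
    · exact ⟨0, le_abs.mpr (Or.inr (by linarith))⟩
    · exact ⟨0, le_abs.mpr (Or.inl (by linarith))⟩
    · exact ⟨1, le_abs.mpr (Or.inr (by linarith))⟩
    · exact ⟨1, le_abs.mpr (Or.inl (by linarith))⟩
  obtain ⟨i, hi⟩ := habs
  have h1 : 1 ≤ ‖y - w‖ := by
    have h := abs_coord_le_norm (y - w) i
    have hyi : (y - w) i = y i - w i := rfl
    rw [hyi] at h
    linarith
  have h2 : ‖y‖ ≤ ‖y - w‖ + 2 := by
    calc ‖y‖ = ‖(y - w) + w‖ := by rw [sub_add_cancel]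
      _ ≤ ‖y - w‖ + ‖w‖ := norm_add_le _ _
      _ ≤ ‖y - w‖ + 2 := by linarith [norm_w_le ⟨hw0, hw1⟩]
  exact ⟨h1, by linarith⟩

end Aux

theorem vortex_patch_lipschitz_mixed :
    ∃ C C' : ℝ, 0 < C ∧ 0 < C' ∧ ∀ x y : E2, x ∈ threeQ0 → y ∉ threeQ0 →
      ‖v x - v y‖ ≤ C * ‖x - y‖ / (1 + ‖y‖) ∧
      ‖v x - v y‖ ≤ C' * ‖x - y‖ / ((1 + ‖x‖) * (1 + ‖y‖)) := by
  refine ⟨374, 1870, by norm_num, by norm_num, fun x y hx hy => ?_⟩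
  have hπ : (0:ℝ) < π := Real.pi_pos
  have hy1 : (0:ℝ) < 1 + ‖y‖ := by positivity
  have hx1 : (0:ℝ) < 1 + ‖x‖ := by positivity
  have hx4 : ‖x‖ ≤ 4 := norm_x_le hx
  have main : ‖v x - v y‖ ≤ 374 * ‖x - y‖ / (1 + ‖y‖) := by
    rcases le_or_gt ‖x - y‖ (1/2) with hnear | hfar
    · -- near case: both are far from Q0, use the exact Lipschitz bound of K
      have hyw : ∀ w ∈ Q0, 1 ≤ ‖y - w‖ ∧ 1 + ‖y‖ ≤ 4 * ‖y - w‖ := fun w hw => y_far hy hw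
      have hxw : ∀ w ∈ Q0, (1:ℝ)/2 ≤ ‖x - w‖ := by
        intro w hw
        have h1 := (hyw w hw).1
        have h2 : ‖y - w‖ ≤ ‖y - x‖ + ‖x - w‖ := by
          calc ‖y - w‖ = ‖(y - x) + (x - w)‖ := by rw [sub_add_sub_cancel]
            _ ≤ ‖y - x‖ + ‖x - w‖ := norm_add_le _ _
        rw [norm_sub_rev y x] at h2
        linarith
      have hQfin : volume Q0 < ⊤ := by rw [volume_Q0]; exact ENNReal.one_lt_top
      have hmf : AEStronglyMeasurable (fun w => K (x - w)) (volume.restrict Q0) :=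
        (measurable_K.comp (measurable_const.sub measurable_id)).aestronglyMeasurable
      have hmg : AEStronglyMeasurable (fun w => K (y - w)) (volume.restrict Q0) :=
        (measurable_K.comp (measurable_const.sub measurable_id)).aestronglyMeasurable
      have hif : IntegrableOn (fun w => K (x - w)) Q0 := by
        refine Integrable.mono' ((integrableOn_const (C := 1 / (2 * π * (1/2))) hQfin.ne)) hmf ?_
        filter_upwards [ae_restrict_mem measurableSet_Q0] with w hw
        exact norm_K_le (by norm_num) (hxw w hw)
      have hig : IntegrableOn (fun w => K (y - w)) Q0 := by
        refine Integrable.mono' ((integrableOn_const (C := 1 / (2 * π * 1)) hQfin.ne)) hmg ?_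
        filter_upwards [ae_restrict_mem measurableSet_Q0] with w hw
        exact norm_K_le (by norm_num) (hyw w hw).1
      have hvsub : v x - v y = ∫ w in Q0, (K (x - w) - K (y - w)) :=
        (integral_sub hif hig).symm
      rw [hvsub]
      have hbound : ∀ w ∈ Q0, ‖K (x - w) - K (y - w)‖
          ≤ 4 * ‖x - y‖ / (π * (1 + ‖y‖)) := by
        intro w hw
        have ha : (x - w) ≠ 0 := by
          intro h
          have := hxw w hw
          rw [h, norm_zero] at this
          linarith
        have hb : (y - w) ≠ 0 := by
          intro h
          have := (hyw w hw).1
          rw [h, norm_zero] at this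
          linarith
        have hyb : (1 + ‖y‖) / 4 ≤ ‖y - w‖ := by linarith [(hyw w hw).2]
        calc ‖K (x - w) - K (y - w)‖
            ≤ ‖(x - w) - (y - w)‖ / (2 * π * (‖x - w‖ * ‖y - w‖)) := K_lip ha hb
          _ = ‖x - y‖ / (2 * π * (‖x - w‖ * ‖y - w‖)) := by rw [sub_sub_sub_cancel_right]
          _ ≤ ‖x - y‖ / (2 * π * ((1/2) * ((1 + ‖y‖) / 4))) := by
              have hxw' := hxw w hw
              gcongr
          _ = 4 * ‖x - y‖ / (π * (1 + ‖y‖)) := by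
              field_simp
      calc ‖∫ w in Q0, (K (x - w) - K (y - w))‖
          ≤ (4 * ‖x - y‖ / (π * (1 + ‖y‖))) * (volume Q0).toReal :=
            norm_setIntegral_le_of_norm_le_const hQfin hbound
        _ = 4 * ‖x - y‖ / (π * (1 + ‖y‖)) := by rw [volume_Q0]; simp
        _ ≤ 374 * ‖x - y‖ / (1 + ‖y‖) := by
            rw [div_le_div_iff₀ (by positivity) (by positivity)]
            nlinarith [Real.pi_gt_three, mul_nonneg (norm_nonneg (x - y))
              (by positivity : (0:ℝ) ≤ 1 + ‖y‖)]
    · -- far case: use the uniform bound on ‖v‖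
      have h34 : ‖v x - v y‖ ≤ 34 :=
        (norm_sub_le _ _).trans (by linarith [norm_v_le x, norm_v_le y])
      have hyx : ‖y‖ ≤ ‖x‖ + ‖x - y‖ := by
        calc ‖y‖ = ‖x - (x - y)‖ := by rw [sub_sub_cancel]
          _ ≤ ‖x‖ + ‖x - y‖ := norm_sub_le _ _
      have h11 : 1 + ‖y‖ ≤ 11 * ‖x - y‖ := by linarith
      rw [le_div_iff₀ hy1]
      nlinarith [mul_le_mul h34 h11 (le_of_lt hy1) (by norm_num : (0:ℝ) ≤ 34)]
  refine ⟨main, main.trans ?_⟩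
  rw [div_le_div_iff₀ (by positivity) (by positivity)]
  nlinarith [mul_le_mul_of_nonneg_right (show 1 + ‖x‖ ≤ 5 by linarith)
    (mul_nonneg (mul_nonneg (by norm_num : (0:ℝ) ≤ 374) (norm_nonneg (x - y)))
      (le_of_lt hy1))]
end

section
/- There exists a constant C such that for all x, y ∈ R^2, Σ_{n ∈ Z^2} 1/((1+|n-x|)^2 (1+|n-y|)^2) ≤ C ln(e + |x| + |y|) / (1 + |x-y|^2). -/
open MeasureTheory Real Filter

section LatticeSumAux
open Finset

/-- Telescoping bound for decreasing nonneg `g`. -/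
lemma tel_sum (g : ℕ → ℝ) (hmono : ∀ k, g (k+1) ≤ g k) (h0 : ∀ k, 0 ≤ g k)
    (a : ℕ) (s : Finset ℕ) (hs : ∀ k ∈ s, a ≤ k) :
    ∑ k ∈ s, (g k - g (k+1)) ≤ g a := by
  classical
  set M := s.sup id with hM
  have hsub : s ⊆ Finset.Ico a (M+1) := by
    intro k hk
    exact Finset.mem_Ico.mpr ⟨hs k hk, Nat.lt_succ_of_le (Finset.le_sup (f := id) hk)⟩
  have h1 : ∑ k ∈ s, (g k - g (k+1)) ≤ ∑ k ∈ Finset.Ico a (M+1), (g k - g (k+1)) :=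
    Finset.sum_le_sum_of_subset_of_nonneg hsub
      (fun k _ _ => sub_nonneg.mpr (hmono k))
  rw [Finset.sum_Ico_eq_sum_range] at h1
  have h2 : ∑ i ∈ range (M + 1 - a), (g (a + i) - g (a + i + 1))
      = g a - g (a + (M + 1 - a)) := by
    have := Finset.sum_range_sub' (fun i => g (a + i)) (M + 1 - a)
    simpa [add_assoc] using this
  calc ∑ k ∈ s, (g k - g (k+1)) ≤ _ := h1
    _ = g a - g (a + (M + 1 - a)) := h2
    _ ≤ g a := by linarith [h0 (a + (M + 1 - a))]

/-- Telescoping bound for increasing `G`. -/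
lemma tel_sum' (G : ℕ → ℝ) (hmono : ∀ k, G k ≤ G (k+1)) (N : ℕ) (s : Finset ℕ)
    (hs : ∀ k ∈ s, k ≤ N) : ∑ k ∈ s, (G (k+1) - G k) ≤ G (N+1) - G 0 := by
  classical
  have hsub : s ⊆ Finset.range (N+1) := fun k hk =>
    Finset.mem_range.mpr (Nat.lt_succ_of_le (hs k hk))
  have h1 : ∑ k ∈ s, (G (k+1) - G k) ≤ ∑ k ∈ Finset.range (N+1), (G (k+1) - G k) :=
    Finset.sum_le_sum_of_subset_of_nonneg hsub
      (fun k _ _ => sub_nonneg.mpr (hmono k))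
  rw [Finset.sum_range_sub] at h1
  exact h1
private noncomputable def gone : ℕ → ℝ := fun m => 1/(1+(m:ℝ))
private noncomputable def gtwo : ℕ → ℝ := fun m => 1/(1+(m:ℝ))^2
private noncomputable def glog : ℕ → ℝ := fun m => Real.log (1+(m:ℝ))

private lemma gone_mono : ∀ k, gone (k+1) ≤ gone k := by
  intro k
  apply div_le_div_of_nonneg_left (by norm_num) (by positivity)
  push_cast; linarith
private lemma gone_nonneg : ∀ k, 0 ≤ gone k := fun k => by unfold gone; positivity
private lemma gtwo_mono : ∀ k, gtwo (k+1) ≤ gtwo k := by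
  intro k
  apply div_le_div_of_nonneg_left (by norm_num) (by positivity)
  have h : (1:ℝ)+k ≤ 1+((k:ℕ)+1:ℕ) := by push_cast; linarith
  have h0 : (0:ℝ) ≤ 1+(k:ℝ) := by positivity
  push_cast
  nlinarith
private lemma gtwo_nonneg : ∀ k, 0 ≤ gtwo k := fun k => by unfold gtwo; positivity
private lemma glog_mono : ∀ k, glog k ≤ glog (k+1) := by
  intro k
  apply Real.log_le_log (by positivity)
  push_cast; linarith

lemma L_sq (s : Finset ℕ) : ∑ k ∈ s, 1/(1+(k:ℝ))^2 ≤ 2 := by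
  have key : ∀ k ∈ s, 1/(1+(k:ℝ))^2 ≤ 2 * (gone k - gone (k+1)) := by
    intro k _
    have h1 : (0:ℝ) < 1 + k := by positivity
    have h2 : (0:ℝ) < 1 + (k:ℝ) + 1 := by positivity
    have heq : gone k - gone (k+1) = 1/((1+(k:ℝ))*(1+(k:ℝ)+1)) := by
      unfold gone; push_cast
      rw [div_sub_div _ _ (by positivity : ((1:ℝ)+(k:ℝ)) ≠ 0) (by positivity : ((1:ℝ)+((k:ℝ)+1)) ≠ 0)]
      rw [show (1:ℝ)+((k:ℝ)+1) = 1+(k:ℝ)+1 by ring]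
      congr 1; ring
    rw [heq, ← mul_div_assoc, div_le_div_iff₀ (by positivity) (by positivity)]
    nlinarith
  calc ∑ k ∈ s, 1/(1+(k:ℝ))^2 ≤ ∑ k ∈ s, 2 * (gone k - gone (k+1)) :=
        Finset.sum_le_sum key
    _ = 2 * ∑ k ∈ s, (gone k - gone (k+1)) := by rw [Finset.mul_sum]
    _ ≤ 2 * gone 0 := by
        have := tel_sum gone gone_mono gone_nonneg 0 s (fun k _ => Nat.zero_le k)
        linarith
    _ = 2 := by unfold gone; norm_num

lemma L_cube_tail (s : Finset ℕ) (B : ℝ) (hB : 0 ≤ B) (hs : ∀ k ∈ s, B ≤ (k:ℝ)) :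
    ∑ k ∈ s, 1/(1+(k:ℝ))^3 ≤ 2/(1+B)^2 := by
  have key : ∀ k ∈ s, 1/(1+(k:ℝ))^3 ≤ 2 * (gtwo k - gtwo (k+1)) := by
    intro k _
    have h1 : (0:ℝ) < 1 + k := by positivity
    have heq : gtwo k - gtwo (k+1) =
        ((1+(k:ℝ)+1)^2 - (1+(k:ℝ))^2)/((1+(k:ℝ))^2*(1+(k:ℝ)+1)^2) := by
      unfold gtwo; push_cast
      rw [div_sub_div _ _ (by positivity : ((1:ℝ)+(k:ℝ))^2 ≠ 0) (by positivity : ((1:ℝ)+((k:ℝ)+1))^2 ≠ 0)]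
      rw [show (1:ℝ)+((k:ℝ)+1) = 1+(k:ℝ)+1 by ring]
      congr 1; ring
    rw [heq, ← mul_div_assoc, div_le_div_iff₀ (by positivity) (by positivity)]
    nlinarith [sq_nonneg ((k:ℝ)), h1.le]
  have ha : ∀ k ∈ s, ⌈B⌉₊ ≤ k := fun k hk => Nat.ceil_le.mpr (hs k hk)
  have hBc : B ≤ (⌈B⌉₊:ℝ) := Nat.le_ceil B
  calc ∑ k ∈ s, 1/(1+(k:ℝ))^3
      ≤ ∑ k ∈ s, 2 * (gtwo k - gtwo (k+1)) := Finset.sum_le_sum key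
    _ = 2 * ∑ k ∈ s, (gtwo k - gtwo (k+1)) := by rw [Finset.mul_sum]
    _ ≤ 2 * gtwo ⌈B⌉₊ := by
        have := tel_sum gtwo gtwo_mono gtwo_nonneg ⌈B⌉₊ s ha
        linarith
    _ ≤ 2/(1+B)^2 := by
        unfold gtwo
        rw [mul_one_div]
        apply div_le_div_of_nonneg_left (by norm_num) (by positivity)
        nlinarith

lemma L_harm (s : Finset ℕ) (N : ℕ) (hs : ∀ k ∈ s, k ≤ N) :
    ∑ k ∈ s, 1/(1+(k:ℝ)) ≤ 2 * Real.log ((N:ℝ)+2) := by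
  have key : ∀ k ∈ s, 1/(1+(k:ℝ)) ≤ 2 * (glog (k+1) - glog k) := by
    intro k _
    have h1 : (0:ℝ) < 1 + k := by positivity
    have h2 : (0:ℝ) < 1 + (k:ℝ) + 1 := by positivity
    have hlog : Real.log ((1+(k:ℝ))/(1+(k:ℝ)+1)) ≤ (1+(k:ℝ))/(1+(k:ℝ)+1) - 1 :=
      Real.log_le_sub_one_of_pos (by positivity)
    rw [Real.log_div (ne_of_gt h1) (ne_of_gt h2)] at hlog
    have heq : (1+(k:ℝ))/(1+(k:ℝ)+1) - 1 = -(1/(1+(k:ℝ)+1)) := by field_simp; ring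
    rw [heq] at hlog
    have h3 : 1/(1+(k:ℝ)+1) ≤ glog (k+1) - glog k := by
      unfold glog; push_cast
      rw [show (1:ℝ)+((k:ℝ)+1) = 1+(k:ℝ)+1 by ring]
      linarith
    have h4 : 1/(1+(k:ℝ)) ≤ 2 * (1/(1+(k:ℝ)+1)) := by
      rw [mul_one_div, div_le_div_iff₀ h1 h2]; linarith
    linarith
  calc ∑ k ∈ s, 1/(1+(k:ℝ))
      ≤ ∑ k ∈ s, 2 * (glog (k+1) - glog k) := Finset.sum_le_sum key
    _ = 2 * ∑ k ∈ s, (glog (k+1) - glog k) := by rw [Finset.mul_sum]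
    _ ≤ 2 * (glog (N+1) - glog 0) := by
        have := tel_sum' glog glog_mono N s hs
        linarith
    _ = 2 * Real.log ((N:ℝ)+2) := by
        unfold glog
        norm_num
        ring_nf

lemma L_inner (s : Finset ℕ) (A : ℝ) (hA : 1 ≤ A) :
    ∑ k ∈ s, 1/(A^2+(1+(k:ℝ))^2) ≤ 4/A := by
  classical
  have hA0 : (0:ℝ) < A := by linarith
  have hsplit := Finset.sum_filter_add_sum_filter_not s (fun k : ℕ => ((k:ℝ)+1 ≤ A))
    (fun k : ℕ => 1/(A^2+(1+(k:ℝ))^2))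
  set s1 := s.filter (fun k : ℕ => ((k:ℝ)+1 ≤ A)) with hs1
  set s2 := s.filter (fun k : ℕ => ¬((k:ℝ)+1 ≤ A)) with hs2
  have h1 : ∑ k ∈ s1, 1/(A^2+(1+(k:ℝ))^2) ≤ 2/A := by
    have hsub : s1 ⊆ Finset.range ⌈A⌉₊ := by
      intro k hk
      have hc := (Finset.mem_filter.mp hk).2
      exact Finset.mem_range.mpr (Nat.lt_ceil.mpr (by linarith))
    have hcard : (s1.card : ℝ) ≤ A + 1 := by
      have hc1 := Finset.card_le_card hsub
      have hc2 : ((⌈A⌉₊ : ℕ) : ℝ) < A + 1 := Nat.ceil_lt_add_one (by linarith)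
      have : (s1.card : ℝ) ≤ (⌈A⌉₊ : ℝ) := by
        exact_mod_cast (by simpa using hc1 : s1.card ≤ ⌈A⌉₊)
      linarith
    have hb := Finset.sum_le_card_nsmul s1 (fun k : ℕ => 1/(A^2+(1+(k:ℝ))^2)) (1/A^2)
      (fun k _ => by
        apply div_le_div_of_nonneg_left (by norm_num) (by positivity)
        nlinarith [sq_nonneg (1+(k:ℝ))])
    rw [nsmul_eq_mul] at hb
    calc ∑ k ∈ s1, 1/(A^2+(1+(k:ℝ))^2) ≤ (s1.card : ℝ) * (1/A^2) := hb
      _ ≤ (A+1) * (1/A^2) := mul_le_mul_of_nonneg_right hcard (by positivity)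
      _ ≤ 2/A := by
          rw [mul_one_div, div_le_div_iff₀ (by positivity) hA0]
          nlinarith
  have h2 : ∑ k ∈ s2, 1/(A^2+(1+(k:ℝ))^2) ≤ 2/A := by
    have key : ∀ k ∈ s2, 1/(A^2+(1+(k:ℝ))^2) ≤ 2 * (gone k - gone (k+1)) := by
      intro k _
      have h1' : (0:ℝ) < 1 + k := by positivity
      have heq : gone k - gone (k+1) = 1/((1+(k:ℝ))*(1+(k:ℝ)+1)) := by
        unfold gone; push_cast
        rw [div_sub_div _ _ (by positivity : ((1:ℝ)+(k:ℝ)) ≠ 0) (by positivity : ((1:ℝ)+((k:ℝ)+1)) ≠ 0)]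
        rw [show (1:ℝ)+((k:ℝ)+1) = 1+(k:ℝ)+1 by ring]
        congr 1; ring
      rw [heq, ← mul_div_assoc, div_le_div_iff₀ (by positivity) (by positivity)]
      nlinarith [sq_nonneg (A - (1+(k:ℝ)))]
    have ha : ∀ k ∈ s2, ⌈A⌉₊ - 1 ≤ k := by
      intro k hk
      have hc := (Finset.mem_filter.mp hk).2
      have hk1 : A ≤ (k:ℝ)+1 := le_of_lt (not_le.mp hc)
      have : ⌈A⌉₊ ≤ k + 1 := Nat.ceil_le.mpr (by push_cast; linarith)
      omega
    have htel := tel_sum gone gone_mono gone_nonneg (⌈A⌉₊ - 1) s2 ha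
    have hone : 1 ≤ ⌈A⌉₊ := Nat.one_le_ceil_iff.mpr (by linarith)
    have hcast : (1:ℝ) + ((⌈A⌉₊ - 1 : ℕ) : ℝ) = (⌈A⌉₊ : ℝ) := by
      rw [Nat.cast_sub hone]; push_cast; ring
    have hAc : A ≤ (⌈A⌉₊ : ℝ) := Nat.le_ceil A
    have hg : gone (⌈A⌉₊ - 1) ≤ 1/A := by
      unfold gone
      rw [hcast]
      exact div_le_div_of_nonneg_left (by norm_num) hA0 hAc
    calc ∑ k ∈ s2, 1/(A^2+(1+(k:ℝ))^2)
        ≤ ∑ k ∈ s2, 2 * (gone k - gone (k+1)) := Finset.sum_le_sum key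
      _ = 2 * ∑ k ∈ s2, (gone k - gone (k+1)) := by rw [Finset.mul_sum]
      _ ≤ 2 * gone (⌈A⌉₊ - 1) := by linarith
      _ ≤ 2 * (1/A) := by linarith
      _ = 2/A := by rw [mul_one_div]
  calc ∑ k ∈ s, 1/(A^2+(1+(k:ℝ))^2)
      = ∑ k ∈ s1, 1/(A^2+(1+(k:ℝ))^2) + ∑ k ∈ s2, 1/(A^2+(1+(k:ℝ))^2) := hsplit.symm
    _ ≤ 2/A + 2/A := add_le_add h1 h2
    _ = 4/A := by ring
lemma int_to_nat_sum (s : Finset ℤ) (G : ℕ → ℝ) (hG : ∀ k, 0 ≤ G k) :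
    ∑ i ∈ s, G i.natAbs ≤ 2 * ∑ k ∈ s.image Int.natAbs, G k := by
  classical
  have hsplit := Finset.sum_filter_add_sum_filter_not s (fun i : ℤ => 0 ≤ i)
    (fun i : ℤ => G i.natAbs)
  set s1 := s.filter (fun i : ℤ => 0 ≤ i) with hs1
  set s2 := s.filter (fun i : ℤ => ¬ 0 ≤ i) with hs2
  have inj1 : ∀ x ∈ s1, ∀ y ∈ s1, x.natAbs = y.natAbs → x = y := by
    intro x hx y hy h
    have hx' := (Finset.mem_filter.mp hx).2
    have hy' := (Finset.mem_filter.mp hy).2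
    omega
  have inj2 : ∀ x ∈ s2, ∀ y ∈ s2, x.natAbs = y.natAbs → x = y := by
    intro x hx y hy h
    have hx' := (Finset.mem_filter.mp hx).2
    have hy' := (Finset.mem_filter.mp hy).2
    omega
  have e1 : ∑ i ∈ s1, G i.natAbs = ∑ k ∈ s1.image Int.natAbs, G k :=
    (Finset.sum_image inj1).symm
  have e2 : ∑ i ∈ s2, G i.natAbs = ∑ k ∈ s2.image Int.natAbs, G k :=
    (Finset.sum_image inj2).symm
  have b1 : ∑ k ∈ s1.image Int.natAbs, G k ≤ ∑ k ∈ s.image Int.natAbs, G k :=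
    Finset.sum_le_sum_of_subset_of_nonneg
      (Finset.image_subset_image (Finset.filter_subset _ _)) (fun k _ _ => hG k)
  have b2 : ∑ k ∈ s2.image Int.natAbs, G k ≤ ∑ k ∈ s.image Int.natAbs, G k :=
    Finset.sum_le_sum_of_subset_of_nonneg
      (Finset.image_subset_image (Finset.filter_subset _ _)) (fun k _ _ => hG k)
  calc ∑ i ∈ s, G i.natAbs = ∑ i ∈ s1, G i.natAbs + ∑ i ∈ s2, G i.natAbs := hsplit.symm
    _ ≤ 2 * ∑ k ∈ s.image Int.natAbs, G k := by rw [e1, e2]; linarith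

lemma round_dist (i : ℤ) (t : ℝ) :
    ((i - round t).natAbs : ℝ) - 1/2 ≤ |(i:ℝ) - t| ∧
      |(i:ℝ) - t| ≤ ((i - round t).natAbs : ℝ) + 1/2 := by
  have h1 : |t - (round t : ℤ)| ≤ 1/2 := abs_sub_round t
  have h2 : ((i - round t).natAbs : ℝ) = |(i:ℝ) - ((round t : ℤ):ℝ)| := by
    rw [Nat.cast_natAbs]
    push_cast
    ring_nf
  have tri1 : |(i:ℝ) - ((round t : ℤ):ℝ)| ≤ |(i:ℝ) - t| + |t - ((round t : ℤ):ℝ)| := by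
    have := abs_add_le ((i:ℝ) - t) (t - ((round t : ℤ):ℝ))
    calc |(i:ℝ) - ((round t : ℤ):ℝ)| = |((i:ℝ) - t) + (t - ((round t : ℤ):ℝ))| := by ring_nf
      _ ≤ _ := this
  have tri2 : |(i:ℝ) - t| ≤ |(i:ℝ) - ((round t : ℤ):ℝ)| + |t - ((round t : ℤ):ℝ)| := by
    have := abs_add_le ((i:ℝ) - ((round t : ℤ):ℝ)) (((round t : ℤ):ℝ) - t)
    have habs : |((round t : ℤ):ℝ) - t| = |t - ((round t : ℤ):ℝ)| := abs_sub_comm _ _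
    calc |(i:ℝ) - t| = |((i:ℝ) - ((round t : ℤ):ℝ)) + (((round t : ℤ):ℝ) - t)| := by ring_nf
      _ ≤ |(i:ℝ) - ((round t : ℤ):ℝ)| + |((round t : ℤ):ℝ) - t| := this
      _ = _ := by rw [habs]
  constructor
  · rw [h2]; linarith
  · rw [h2]; linarith

/-- Master transfer lemma from ℤ-sums to ℕ-sums. -/
lemma Z_master (s : Finset ℤ) (c : ℤ) (G : ℕ → ℝ) (hG : ∀ k, 0 ≤ G k) (F : ℤ → ℝ)
    (hF : ∀ i ∈ s, F i ≤ G (i - c).natAbs) :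
    ∑ i ∈ s, F i ≤ 2 * ∑ k ∈ ((s.image (fun i => i - c)).image Int.natAbs), G k := by
  classical
  have step1 : ∑ i ∈ s, F i ≤ ∑ i ∈ s, G (i - c).natAbs := Finset.sum_le_sum hF
  have step2 : ∑ j ∈ s.image (fun i => i - c), G j.natAbs = ∑ i ∈ s, G (i - c).natAbs :=
    Finset.sum_image (f := fun j : ℤ => G j.natAbs) (g := fun i : ℤ => i - c)
      (fun x _ y _ h => by simp only [] at h; omega)
  have step3 := int_to_nat_sum (s.image (fun i => i - c)) G hG
  linarith

lemma mem_master (s : Finset ℤ) (c : ℤ) (k : ℕ)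
    (hk : k ∈ ((s.image (fun i => i - c)).image Int.natAbs)) :
    ∃ i ∈ s, (i - c).natAbs = k := by
  classical
  rcases Finset.mem_image.mp hk with ⟨j, hj, hjk⟩
  rcases Finset.mem_image.mp hj with ⟨i, hi, hij⟩
  exact ⟨i, hi, by rw [hij, hjk]⟩

lemma half_bound (i : ℤ) (t : ℝ) :
    (1 + ((i - round t).natAbs : ℝ))/2 ≤ 1 + |(i:ℝ) - t| := by
  have := (round_dist i t).1
  linarith

lemma Z_row (s : Finset ℤ) (t A : ℝ) (hA : 1 ≤ A) :
    ∑ i ∈ s, 1/(A^2+(1+|(i:ℝ)-t|)^2) ≤ 32/A := by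
  have hA0 : (0:ℝ) < A := by linarith
  have key := Z_master s (round t) (fun k => 4/(A^2+(1+(k:ℝ))^2))
    (fun k => by positivity)
    (fun i => 1/(A^2+(1+|(i:ℝ)-t|)^2))
    (by
      intro i _
      have hh := half_bound i t
      have hw : (0:ℝ) ≤ |(i:ℝ)-t| := abs_nonneg _
      have hm : (0:ℝ) ≤ ((i - round t).natAbs : ℝ) := Nat.cast_nonneg _
      have h1 : (1+((i - round t).natAbs:ℝ))^2/4 ≤ (1+|(i:ℝ)-t|)^2 := by
        nlinarith
      have h2 : (A^2+(1+((i - round t).natAbs:ℝ))^2)/4 ≤ A^2+(1+|(i:ℝ)-t|)^2 := by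
        nlinarith
      rw [div_le_div_iff₀ (by positivity) (by positivity)]
      nlinarith)
  have hnat := L_inner ((s.image (fun i => i - round t)).image Int.natAbs) A hA
  have e : ∑ k ∈ ((s.image (fun i => i - round t)).image Int.natAbs),
      4/(A^2+(1+(k:ℝ))^2)
      = 4 * ∑ k ∈ ((s.image (fun i => i - round t)).image Int.natAbs),
        1/(A^2+(1+(k:ℝ))^2) := by
    rw [Finset.mul_sum]
    apply Finset.sum_congr rfl
    intro k _
    rw [mul_one_div]
  rw [e] at key
  calc ∑ i ∈ s, 1/(A^2+(1+|(i:ℝ)-t|)^2) ≤ 2 * (4 * _) := key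
    _ ≤ 2 * (4 * (4/A)) := by nlinarith
    _ = 32/A := by ring

lemma Z_sq (s : Finset ℤ) (t : ℝ) :
    ∑ i ∈ s, 1/(1+|(i:ℝ)-t|)^2 ≤ 16 := by
  have key := Z_master s (round t) (fun k => 4/(1+(k:ℝ))^2)
    (fun k => by positivity)
    (fun i => 1/(1+|(i:ℝ)-t|)^2)
    (by
      intro i _
      have hh := half_bound i t
      have hw : (0:ℝ) ≤ |(i:ℝ)-t| := abs_nonneg _
      have hm : (0:ℝ) ≤ ((i - round t).natAbs : ℝ) := Nat.cast_nonneg _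
      rw [div_le_div_iff₀ (by positivity) (by positivity)]
      nlinarith)
  have hnat := L_sq ((s.image (fun i => i - round t)).image Int.natAbs)
  have e : ∑ k ∈ ((s.image (fun i => i - round t)).image Int.natAbs),
      4/(1+(k:ℝ))^2
      = 4 * ∑ k ∈ ((s.image (fun i => i - round t)).image Int.natAbs),
        1/(1+(k:ℝ))^2 := by
    rw [Finset.mul_sum]
    exact Finset.sum_congr rfl (fun k _ => by rw [mul_one_div])
  rw [e] at key
  calc ∑ i ∈ s, 1/(1+|(i:ℝ)-t|)^2 ≤ 2 * (4 * _) := key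
    _ ≤ 2 * (4 * 2) := by nlinarith
    _ = 16 := by ring

lemma Z_log (s : Finset ℤ) (t R : ℝ) (hR : 0 ≤ R) (hs : ∀ i ∈ s, |(i:ℝ)-t| ≤ R) :
    ∑ i ∈ s, 1/(1+|(i:ℝ)-t|) ≤ 16 * Real.log (Real.exp 1 + R) := by
  have key := Z_master s (round t) (fun k => 2/(1+(k:ℝ)))
    (fun k => by positivity)
    (fun i => 1/(1+|(i:ℝ)-t|))
    (by
      intro i _
      have hh := half_bound i t
      have hw : (0:ℝ) ≤ |(i:ℝ)-t| := abs_nonneg _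
      have hm : (0:ℝ) ≤ ((i - round t).natAbs : ℝ) := Nat.cast_nonneg _
      rw [div_le_div_iff₀ (by positivity) (by positivity)]
      nlinarith)
  set T := ((s.image (fun i => i - round t)).image Int.natAbs) with hT
  have hmem : ∀ k ∈ T, k ≤ ⌈R⌉₊ + 1 := by
    intro k hk
    rcases mem_master s (round t) k hk with ⟨i, hi, hik⟩
    have h1 := (round_dist i t).1
    have h2 := hs i hi
    have h3 : (k:ℝ) ≤ R + 1/2 := by rw [← hik]; linarith
    have h4 : R ≤ (⌈R⌉₊:ℝ) := Nat.le_ceil R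
    have : (k:ℝ) ≤ ((⌈R⌉₊ + 1 : ℕ):ℝ) := by push_cast; linarith
    exact_mod_cast this
  have hnat := L_harm T (⌈R⌉₊ + 1) hmem
  have e : ∑ k ∈ T, 2/(1+(k:ℝ)) = 2 * ∑ k ∈ T, 1/(1+(k:ℝ)) := by
    rw [Finset.mul_sum]
    exact Finset.sum_congr rfl (fun k _ => by rw [mul_one_div])
  rw [e] at key
  have hcl : ((⌈R⌉₊ + 1 : ℕ):ℝ) + 2 ≤ R + 4 := by
    have := Nat.ceil_lt_add_one hR
    push_cast
    linarith
  have hpos : (0:ℝ) < Real.exp 1 + R := by positivity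
  have hlog1 : Real.log (((⌈R⌉₊ + 1 : ℕ):ℝ) + 2) ≤ Real.log (R + 4) :=
    Real.log_le_log (by positivity) hcl
  have hlog2 : Real.log (R + 4) ≤ 2 * Real.log (Real.exp 1 + R) := by
    have hsq : R + 4 ≤ (Real.exp 1 + R)^2 := by
      have he : (2.7:ℝ) ≤ Real.exp 1 := by
        have := Real.add_one_le_exp (1:ℝ)
        nlinarith [Real.exp_one_gt_d9]
      nlinarith [sq_nonneg R, hR]
    calc Real.log (R + 4) ≤ Real.log ((Real.exp 1 + R)^2) :=
          Real.log_le_log (by linarith) hsq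
      _ = 2 * Real.log (Real.exp 1 + R) := by
          rw [Real.log_pow]; push_cast; ring
  calc ∑ i ∈ s, 1/(1+|(i:ℝ)-t|) ≤ 2 * (2 * ∑ k ∈ T, 1/(1+(k:ℝ))) := key
    _ ≤ 2 * (2 * (2 * Real.log (((⌈R⌉₊ + 1 : ℕ):ℝ) + 2))) := by nlinarith
    _ ≤ 16 * Real.log (Real.exp 1 + R) := by nlinarith

lemma Z_cube_tail (s : Finset ℤ) (t ρ : ℝ) (hρ : 0 ≤ ρ) (hs : ∀ i ∈ s, ρ ≤ |(i:ℝ)-t|) :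
    ∑ i ∈ s, 1/(1+|(i:ℝ)-t|)^3 ≤ 128/(1+ρ)^2 := by
  have key := Z_master s (round t) (fun k => 8/(1+(k:ℝ))^3)
    (fun k => by positivity)
    (fun i => 1/(1+|(i:ℝ)-t|)^3)
    (by
      intro i _
      have hh := half_bound i t
      have hw : (0:ℝ) ≤ |(i:ℝ)-t| := abs_nonneg _
      have hm : (0:ℝ) ≤ ((i - round t).natAbs : ℝ) := Nat.cast_nonneg _
      rw [div_le_div_iff₀ (by positivity) (by positivity)]
      have hcube : (1+((i - round t).natAbs:ℝ))^3 ≤ (2*(1+|(i:ℝ)-t|))^3 :=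
        pow_le_pow_left₀ (by positivity) (by linarith) 3
      nlinarith [hcube])
  set T := ((s.image (fun i => i - round t)).image Int.natAbs) with hT
  set B := max (ρ - 1/2) 0 with hB
  have hB0 : 0 ≤ B := le_max_right _ _
  have hmem : ∀ k ∈ T, B ≤ (k:ℝ) := by
    intro k hk
    rcases mem_master s (round t) k hk with ⟨i, hi, hik⟩
    have h1 := (round_dist i t).2
    have h2 := hs i hi
    have h3 : ρ - 1/2 ≤ (k:ℝ) := by rw [← hik]; linarith
    have h4 : (0:ℝ) ≤ (k:ℝ) := Nat.cast_nonneg _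
    exact max_le h3 h4
  have hnat := L_cube_tail T B hB0 hmem
  have e : ∑ k ∈ T, 8/(1+(k:ℝ))^3 = 8 * ∑ k ∈ T, 1/(1+(k:ℝ))^3 := by
    rw [Finset.mul_sum]
    exact Finset.sum_congr rfl (fun k _ => by rw [mul_one_div])
  rw [e] at key
  have hBρ : (1+ρ)/2 ≤ 1 + B := by
    rcases le_or_gt ρ (1/2) with h | h
    · have : B = max (ρ - 1/2) 0 := hB
      have hB' : 0 ≤ B := hB0
      linarith
    · have : ρ - 1/2 ≤ B := le_max_left _ _
      linarith
  have hfinal : 2/(1+B)^2 ≤ 8/(1+ρ)^2 := by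
    rw [div_le_div_iff₀ (by positivity) (by positivity)]
    nlinarith
  calc ∑ i ∈ s, 1/(1+|(i:ℝ)-t|)^3 ≤ 2 * (8 * ∑ k ∈ T, 1/(1+(k:ℝ))^3) := key
    _ ≤ 2 * (8 * (8/(1+ρ)^2)) := by nlinarith
    _ = 128/(1+ρ)^2 := by ring


lemma norm_facts (n : ℤ × ℤ) (x : E2) :
    |(n.1:ℝ) - x 0| ≤ ‖latt n - x‖ ∧ |(n.2:ℝ) - x 1| ≤ ‖latt n - x‖ ∧
      ‖latt n - x‖ ≤ |(n.1:ℝ) - x 0| + |(n.2:ℝ) - x 1| := by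
  have h0 : (latt n - x) 0 = (n.1:ℝ) - x 0 := by
    simp [latt, PiLp.sub_apply]
  have h1 : (latt n - x) 1 = (n.2:ℝ) - x 1 := by
    simp [latt, PiLp.sub_apply]
  have hn : ‖latt n - x‖ =
      Real.sqrt (((n.1:ℝ) - x 0)^2 + ((n.2:ℝ) - x 1)^2) := by
    rw [EuclideanSpace.norm_eq, Fin.sum_univ_two, h0, h1]
    simp [Real.norm_eq_abs, sq_abs]
  set u := (n.1:ℝ) - x 0
  set w := (n.2:ℝ) - x 1
  have hu : |u|^2 = u^2 := sq_abs u
  have hw : |w|^2 = w^2 := sq_abs w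
  refine ⟨?_, ?_, ?_⟩
  · rw [hn]
    calc |u| = Real.sqrt (|u|^2) := (Real.sqrt_sq (abs_nonneg u)).symm
      _ ≤ _ := Real.sqrt_le_sqrt (by nlinarith [sq_nonneg w])
  · rw [hn]
    calc |w| = Real.sqrt (|w|^2) := (Real.sqrt_sq (abs_nonneg w)).symm
      _ ≤ _ := Real.sqrt_le_sqrt (by nlinarith [sq_nonneg u])
  · rw [hn]
    calc Real.sqrt (u^2 + w^2) ≤ Real.sqrt ((|u| + |w|)^2) := by
          apply Real.sqrt_le_sqrt
          nlinarith [abs_nonneg u, abs_nonneg w, abs_mul_abs_self u, abs_mul_abs_self w,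
            mul_nonneg (abs_nonneg u) (abs_nonneg w)]
      _ = |u| + |w| := Real.sqrt_sq (by positivity)

lemma P_A (s : Finset (ℤ × ℤ)) (x : E2) (R : ℝ) (hR : 0 ≤ R)
    (hs : ∀ n ∈ s, ‖latt n - x‖ ≤ R) :
    ∑ n ∈ s, 1/(1+‖latt n - x‖)^2 ≤ 1024 * Real.log (Real.exp 1 + R) := by
  classical
  set I := s.image Prod.fst with hI
  set J := s.image Prod.snd with hJ
  set F : ℤ × ℤ → ℝ := fun p => 2/((1+|(p.1:ℝ) - x 0|)^2 + (1+|(p.2:ℝ) - x 1|)^2) with hF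
  have hFnn : ∀ p, 0 ≤ F p := fun p => by positivity
  have step1 : ∑ n ∈ s, 1/(1+‖latt n - x‖)^2 ≤ ∑ n ∈ s, F n := by
    apply Finset.sum_le_sum
    intro n hn
    obtain ⟨hu1, hu2, -⟩ := norm_facts n x
    have ha : (0:ℝ) ≤ ‖latt n - x‖ := norm_nonneg _
    rw [hF]
    rw [div_le_div_iff₀ (by positivity) (by positivity)]
    nlinarith [abs_nonneg ((n.1:ℝ) - x 0), abs_nonneg ((n.2:ℝ) - x 1)]
  have step2 : ∑ n ∈ s, F n ≤ ∑ p ∈ I ×ˢ J, F p := by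
    apply Finset.sum_le_sum_of_subset_of_nonneg
    · intro n hn
      exact Finset.mem_product.mpr ⟨Finset.mem_image_of_mem _ hn, Finset.mem_image_of_mem _ hn⟩
    · exact fun p _ _ => hFnn p
  have step3 : ∑ p ∈ I ×ˢ J, F p = ∑ i ∈ I, ∑ j ∈ J, F (i, j) :=
    Finset.sum_product _ _ _
  have step4 : ∀ i ∈ I, ∑ j ∈ J, F (i, j) ≤ 64/(1+|(i:ℝ) - x 0|) := by
    intro i _
    set A := 1 + |(i:ℝ) - x 0| with hA
    have hA1 : 1 ≤ A := by rw [hA]; have := abs_nonneg ((i:ℝ) - x 0); linarith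
    have hrow := Z_row J (x 1) A hA1
    have e : ∑ j ∈ J, F (i, j) = 2 * ∑ j ∈ J, 1/(A^2+(1+|(j:ℝ) - x 1|)^2) := by
      rw [Finset.mul_sum]
      exact Finset.sum_congr rfl (fun j _ => by rw [hF, mul_one_div])
    rw [e]
    have hA0 : (0:ℝ) < A := by linarith
    calc 2 * ∑ j ∈ J, 1/(A^2+(1+|(j:ℝ) - x 1|)^2) ≤ 2 * (32/A) := by linarith
      _ = 64/A := by ring
  have step5 : ∑ i ∈ I, (64/(1+|(i:ℝ) - x 0|)) ≤ 64 * (16 * Real.log (Real.exp 1 + R)) := by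
    have hmem : ∀ i ∈ I, |(i:ℝ) - x 0| ≤ R := by
      intro i hi
      rcases Finset.mem_image.mp hi with ⟨n, hn, hni⟩
      obtain ⟨hu1, -, -⟩ := norm_facts n x
      rw [← hni]
      exact le_trans hu1 (hs n hn)
    have := Z_log I (x 0) R hR hmem
    have e : ∑ i ∈ I, (64/(1+|(i:ℝ) - x 0|)) = 64 * ∑ i ∈ I, 1/(1+|(i:ℝ) - x 0|) := by
      rw [Finset.mul_sum]
      exact Finset.sum_congr rfl (fun i _ => by rw [mul_one_div])
    rw [e]
    linarith
  have step45 : ∑ i ∈ I, ∑ j ∈ J, F (i, j) ≤ ∑ i ∈ I, (64/(1+|(i:ℝ) - x 0|)) :=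
    Finset.sum_le_sum step4
  calc ∑ n ∈ s, 1/(1+‖latt n - x‖)^2 ≤ ∑ n ∈ s, F n := step1
    _ ≤ ∑ p ∈ I ×ˢ J, F p := step2
    _ = ∑ i ∈ I, ∑ j ∈ J, F (i, j) := step3
    _ ≤ ∑ i ∈ I, (64/(1+|(i:ℝ) - x 0|)) := step45
    _ ≤ 64 * (16 * Real.log (Real.exp 1 + R)) := step5
    _ = 1024 * Real.log (Real.exp 1 + R) := by ring

lemma P_B (s : Finset (ℤ × ℤ)) (x : E2) (R : ℝ) (hR : 0 ≤ R)
    (hs : ∀ n ∈ s, R ≤ ‖latt n - x‖) :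
    ∑ n ∈ s, 1/(1+‖latt n - x‖)^4 ≤ 65536/(1+R)^2 := by
  classical
  have hsplit := Finset.sum_filter_add_sum_filter_not s
    (fun n : ℤ × ℤ => R/2 ≤ |(n.1:ℝ) - x 0|) (fun n => 1/(1+‖latt n - x‖)^4)
  set s1 := s.filter (fun n : ℤ × ℤ => R/2 ≤ |(n.1:ℝ) - x 0|) with hs1
  set s2 := s.filter (fun n : ℤ × ℤ => ¬(R/2 ≤ |(n.1:ℝ) - x 0|)) with hs2
  have cube_shift : 128/(1+R/2)^2 ≤ 512/(1+R)^2 := by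
    rw [div_le_div_iff₀ (by positivity) (by positivity)]
    nlinarith [hR]
  -- part 1
  have part1 : ∑ n ∈ s1, 1/(1+‖latt n - x‖)^4 ≤ 32768/(1+R)^2 := by
    set I := s1.image Prod.fst with hI
    set J := s1.image Prod.snd with hJ
    set F : ℤ × ℤ → ℝ := fun p =>
      2/(1+|(p.1:ℝ) - x 0|)^2 * (1/((1+|(p.1:ℝ) - x 0|)^2 + (1+|(p.2:ℝ) - x 1|)^2)) with hF
    have hFnn : ∀ p, 0 ≤ F p := fun p => by rw [hF]; positivity
    have step1 : ∑ n ∈ s1, 1/(1+‖latt n - x‖)^4 ≤ ∑ n ∈ s1, F n := by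
      apply Finset.sum_le_sum
      intro n _
      obtain ⟨hu1, hu2, -⟩ := norm_facts n x
      have ha : (0:ℝ) ≤ ‖latt n - x‖ := norm_nonneg _
      have hv1 : (0:ℝ) ≤ |(n.1:ℝ) - x 0| := abs_nonneg _
      have hv2 : (0:ℝ) ≤ |(n.2:ℝ) - x 1| := abs_nonneg _
      have k1 : (1+|(n.1:ℝ) - x 0|)^2 ≤ (1+‖latt n - x‖)^2 := by nlinarith
      have k2 : (1+|(n.1:ℝ) - x 0|)^2 + (1+|(n.2:ℝ) - x 1|)^2 ≤ 2*(1+‖latt n - x‖)^2 := by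
        nlinarith
      rw [hF]
      beta_reduce
      rw [div_mul_div_comm]
      rw [div_le_div_iff₀ (by positivity) (by positivity)]
      have e4 : (1+‖latt n - x‖)^4 = (1+‖latt n - x‖)^2 * (1+‖latt n - x‖)^2 := by ring
      nlinarith [sq_nonneg (1+|(n.1:ℝ) - x 0|), sq_nonneg (1+‖latt n - x‖),
        mul_le_mul k1 k2 (by positivity) (by positivity)]
    have step2 : ∑ n ∈ s1, F n ≤ ∑ p ∈ I ×ˢ J, F p := by
      apply Finset.sum_le_sum_of_subset_of_nonneg
      · intro n hn
        exact Finset.mem_product.mpr ⟨Finset.mem_image_of_mem _ hn, Finset.mem_image_of_mem _ hn⟩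
      · exact fun p _ _ => hFnn p
    have step3 : ∑ p ∈ I ×ˢ J, F p = ∑ i ∈ I, ∑ j ∈ J, F (i, j) :=
      Finset.sum_product _ _ _
    have step4 : ∀ i ∈ I, ∑ j ∈ J, F (i, j) ≤ 64/(1+|(i:ℝ) - x 0|)^3 := by
      intro i _
      set A := 1 + |(i:ℝ) - x 0| with hA
      have hA1 : 1 ≤ A := by rw [hA]; have := abs_nonneg ((i:ℝ) - x 0); linarith
      have hA0 : (0:ℝ) < A := by linarith
      have hrow := Z_row J (x 1) A hA1
      have e : ∑ j ∈ J, F (i, j) = 2/A^2 * ∑ j ∈ J, 1/(A^2+(1+|(j:ℝ) - x 1|)^2) := by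
        rw [Finset.mul_sum]
      rw [e]
      calc 2/A^2 * ∑ j ∈ J, 1/(A^2+(1+|(j:ℝ) - x 1|)^2) ≤ 2/A^2 * (32/A) := by
            apply mul_le_mul_of_nonneg_left hrow (by positivity)
        _ = 64/A^3 := by field_simp; ring
    have step5 : ∑ i ∈ I, (64/(1+|(i:ℝ) - x 0|)^3) ≤ 64 * (128/(1+R/2)^2) := by
      have hmem : ∀ i ∈ I, R/2 ≤ |(i:ℝ) - x 0| := by
        intro i hi
        rcases Finset.mem_image.mp hi with ⟨n, hn, hni⟩
        have := (Finset.mem_filter.mp hn).2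
        rw [← hni]
        exact this
      have := Z_cube_tail I (x 0) (R/2) (by linarith) hmem
      have e : ∑ i ∈ I, (64/(1+|(i:ℝ) - x 0|)^3) = 64 * ∑ i ∈ I, 1/(1+|(i:ℝ) - x 0|)^3 := by
        rw [Finset.mul_sum]
        exact Finset.sum_congr rfl (fun i _ => by rw [mul_one_div])
      rw [e]
      linarith
    calc ∑ n ∈ s1, 1/(1+‖latt n - x‖)^4 ≤ ∑ n ∈ s1, F n := step1
      _ ≤ ∑ p ∈ I ×ˢ J, F p := step2
      _ = ∑ i ∈ I, ∑ j ∈ J, F (i, j) := step3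
      _ ≤ ∑ i ∈ I, (64/(1+|(i:ℝ) - x 0|)^3) := Finset.sum_le_sum step4
      _ ≤ 64 * (128/(1+R/2)^2) := step5
      _ ≤ 64 * (512/(1+R)^2) := by nlinarith [cube_shift]
      _ = 32768/(1+R)^2 := by ring
  -- part 2
  have part2 : ∑ n ∈ s2, 1/(1+‖latt n - x‖)^4 ≤ 32768/(1+R)^2 := by
    have hs2mem : ∀ n ∈ s2, R/2 ≤ |(n.2:ℝ) - x 1| := by
      intro n hn
      have hns := (Finset.mem_filter.mp hn).1
      have hnot := (Finset.mem_filter.mp hn).2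
      obtain ⟨-, -, htri⟩ := norm_facts n x
      have := hs n hns
      have hu1 := not_le.mp hnot
      linarith
    set I := s2.image Prod.fst with hI
    set J := s2.image Prod.snd with hJ
    set F : ℤ × ℤ → ℝ := fun p =>
      2/(1+|(p.2:ℝ) - x 1|)^2 * (1/((1+|(p.2:ℝ) - x 1|)^2 + (1+|(p.1:ℝ) - x 0|)^2)) with hF
    have hFnn : ∀ p, 0 ≤ F p := fun p => by rw [hF]; positivity
    have step1 : ∑ n ∈ s2, 1/(1+‖latt n - x‖)^4 ≤ ∑ n ∈ s2, F n := by
      apply Finset.sum_le_sum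
      intro n _
      obtain ⟨hu1, hu2, -⟩ := norm_facts n x
      have ha : (0:ℝ) ≤ ‖latt n - x‖ := norm_nonneg _
      have hv1 : (0:ℝ) ≤ |(n.1:ℝ) - x 0| := abs_nonneg _
      have hv2 : (0:ℝ) ≤ |(n.2:ℝ) - x 1| := abs_nonneg _
      have k1 : (1+|(n.2:ℝ) - x 1|)^2 ≤ (1+‖latt n - x‖)^2 := by nlinarith
      have k2 : (1+|(n.2:ℝ) - x 1|)^2 + (1+|(n.1:ℝ) - x 0|)^2 ≤ 2*(1+‖latt n - x‖)^2 := by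
        nlinarith
      rw [hF]
      beta_reduce
      rw [div_mul_div_comm]
      rw [div_le_div_iff₀ (by positivity) (by positivity)]
      nlinarith [sq_nonneg (1+|(n.2:ℝ) - x 1|), sq_nonneg (1+‖latt n - x‖),
        mul_le_mul k1 k2 (by positivity) (by positivity)]
    have step2 : ∑ n ∈ s2, F n ≤ ∑ p ∈ I ×ˢ J, F p := by
      apply Finset.sum_le_sum_of_subset_of_nonneg
      · intro n hn
        exact Finset.mem_product.mpr ⟨Finset.mem_image_of_mem _ hn, Finset.mem_image_of_mem _ hn⟩
      · exact fun p _ _ => hFnn p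
    have step3 : ∑ p ∈ I ×ˢ J, F p = ∑ j ∈ J, ∑ i ∈ I, F (i, j) :=
      Finset.sum_product_right _ _ _
    have step4 : ∀ j ∈ J, ∑ i ∈ I, F (i, j) ≤ 64/(1+|(j:ℝ) - x 1|)^3 := by
      intro j _
      set A := 1 + |(j:ℝ) - x 1| with hA
      have hA1 : 1 ≤ A := by rw [hA]; have := abs_nonneg ((j:ℝ) - x 1); linarith
      have hA0 : (0:ℝ) < A := by linarith
      have hrow := Z_row I (x 0) A hA1
      have e : ∑ i ∈ I, F (i, j) = 2/A^2 * ∑ i ∈ I, 1/(A^2+(1+|(i:ℝ) - x 0|)^2) := by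
        rw [Finset.mul_sum]
      rw [e]
      calc 2/A^2 * ∑ i ∈ I, 1/(A^2+(1+|(i:ℝ) - x 0|)^2) ≤ 2/A^2 * (32/A) := by
            apply mul_le_mul_of_nonneg_left hrow (by positivity)
        _ = 64/A^3 := by field_simp; ring
    have step5 : ∑ j ∈ J, (64/(1+|(j:ℝ) - x 1|)^3) ≤ 64 * (128/(1+R/2)^2) := by
      have hmem : ∀ j ∈ J, R/2 ≤ |(j:ℝ) - x 1| := by
        intro j hj
        rcases Finset.mem_image.mp hj with ⟨n, hn, hnj⟩
        rw [← hnj]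
        exact hs2mem n hn
      have := Z_cube_tail J (x 1) (R/2) (by linarith) hmem
      have e : ∑ j ∈ J, (64/(1+|(j:ℝ) - x 1|)^3) = 64 * ∑ j ∈ J, 1/(1+|(j:ℝ) - x 1|)^3 := by
        rw [Finset.mul_sum]
        exact Finset.sum_congr rfl (fun j _ => by rw [mul_one_div])
      rw [e]
      linarith
    calc ∑ n ∈ s2, 1/(1+‖latt n - x‖)^4 ≤ ∑ n ∈ s2, F n := step1
      _ ≤ ∑ p ∈ I ×ˢ J, F p := step2
      _ = ∑ j ∈ J, ∑ i ∈ I, F (i, j) := step3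
      _ ≤ ∑ j ∈ J, (64/(1+|(j:ℝ) - x 1|)^3) := Finset.sum_le_sum step4
      _ ≤ 64 * (128/(1+R/2)^2) := step5
      _ ≤ 64 * (512/(1+R)^2) := by nlinarith [cube_shift]
      _ = 32768/(1+R)^2 := by ring
  calc ∑ n ∈ s, 1/(1+‖latt n - x‖)^4
      = ∑ n ∈ s1, 1/(1+‖latt n - x‖)^4 + ∑ n ∈ s2, 1/(1+‖latt n - x‖)^4 := hsplit.symm
    _ ≤ 32768/(1+R)^2 + 32768/(1+R)^2 := add_le_add part1 part2
    _ = 65536/(1+R)^2 := by ring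


lemma helper_G1 (p q D : ℝ) (hp : 0 ≤ p) (hq : 0 ≤ q) (hD : 0 ≤ D) (h : 1 + D ≤ 2*(1+q)) :
    1/((1+p)^2*(1+q)^2) ≤ 4/(1+D)^2 * (1/(1+p)^2) := by
  rw [div_mul_div_comm, div_le_div_iff₀ (by positivity) (by positivity)]
  have h4 : (1+D)^2 ≤ 4*(1+q)^2 := by nlinarith
  nlinarith [mul_le_mul_of_nonneg_right h4 (sq_nonneg (1+p))]

lemma helper_G3 (p q : ℝ) (hp : 0 ≤ p) (hq : 0 ≤ q) :
    1/((1+p)^2*(1+q)^2) ≤ 1/2 * (1/(1+p)^4) + 1/2 * (1/(1+q)^4) := by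
  have h1 : (0:ℝ) < 1+p := by linarith
  have h2 : (0:ℝ) < 1+q := by linarith
  have e1 : 1/((1+p)^2*(1+q)^2) = (1/(1+p)^2) * (1/(1+q)^2) := (one_div_mul_one_div _ _).symm
  have e2 : (1/(1+p)^2)^2 = 1/(1+p)^4 := by
    rw [div_pow, one_pow, ← pow_mul]
  have e3 : (1/(1+q)^2)^2 = 1/(1+q)^4 := by
    rw [div_pow, one_pow, ← pow_mul]
  rw [e1, ← e2, ← e3]
  nlinarith [sq_nonneg (1/(1+p)^2 - 1/(1+q)^2)]


end LatticeSumAux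

set_option maxHeartbeats 2000000 in
theorem lattice_sum_S_decay :
    ∃ C : ℝ, ∀ x y : E2,
      (∑' n : ℤ × ℤ, 1 / ((1 + ‖latt n - x‖) ^ 2 * (1 + ‖latt n - y‖) ^ 2)) ≤
        C * Real.log (Real.exp 1 + ‖x‖ + ‖y‖) / (1 + ‖x - y‖ ^ 2) := by
  classical
  refine ⟨270336, fun x y => ?_⟩
  set d := ‖x - y‖ with hd
  set L := Real.log (Real.exp 1 + ‖x‖ + ‖y‖) with hL
  have hd0 : 0 ≤ d := norm_nonneg _
  have hdxy : d ≤ ‖x‖ + ‖y‖ := norm_sub_le x y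
  have hx0 : 0 ≤ ‖x‖ := norm_nonneg _
  have hy0 : 0 ≤ ‖y‖ := norm_nonneg _
  have hL1 : 1 ≤ L := by
    rw [hL]
    calc (1:ℝ) = Real.log (Real.exp 1) := (Real.log_exp 1).symm
      _ ≤ _ := Real.log_le_log (Real.exp_pos 1) (by linarith)
  have hc : (0:ℝ) ≤ 270336 * L / (1 + d^2) := by positivity
  apply tsum_le_of_sum_le' hc
  intro s
  set a : ℤ × ℤ → ℝ := fun n => ‖latt n - x‖ with ha
  set b : ℤ × ℤ → ℝ := fun n => ‖latt n - y‖ with hb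
  have han : ∀ n, 0 ≤ a n := fun n => norm_nonneg _
  have hbn : ∀ n, 0 ≤ b n := fun n => norm_nonneg _
  have htri : ∀ n, d ≤ a n + b n := by
    intro n
    calc d = ‖(latt n - y) - (latt n - x)‖ := by rw [hd]; congr 1; abel
      _ ≤ ‖latt n - y‖ + ‖latt n - x‖ := norm_sub_le _ _
      _ = a n + b n := by rw [ha, hb]; ring
  set G1 : ℤ × ℤ → ℝ := fun n => if a n ≤ d/2 then 4/(1+d)^2 * (1/(1+a n)^2) else 0 with hG1
  set G2 : ℤ × ℤ → ℝ := fun n => if b n ≤ d/2 then 4/(1+d)^2 * (1/(1+b n)^2) else 0 with hG2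
  set G3 : ℤ × ℤ → ℝ := fun n => if ¬(a n ≤ d/2) then (1/2) * (1/(1+a n)^4) else 0 with hG3
  set G4 : ℤ × ℤ → ℝ := fun n => if ¬(b n ≤ d/2) then (1/2) * (1/(1+b n)^4) else 0 with hG4
  have hG1nn : ∀ n, 0 ≤ G1 n := fun n => by rw [hG1]; beta_reduce; split <;> positivity
  have hG2nn : ∀ n, 0 ≤ G2 n := fun n => by rw [hG2]; beta_reduce; split <;> positivity
  have hG3nn : ∀ n, 0 ≤ G3 n := fun n => by rw [hG3]; beta_reduce; split <;> positivity
  have hG4nn : ∀ n, 0 ≤ G4 n := fun n => by rw [hG4]; beta_reduce; split <;> positivity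
  have pointwise : ∀ n ∈ s, 1 / ((1 + ‖latt n - x‖) ^ 2 * (1 + ‖latt n - y‖) ^ 2)
      ≤ G1 n + G2 n + G3 n + G4 n := by
    intro n _
    have h1a : (0:ℝ) < 1 + a n := by linarith [han n]
    have h1b : (0:ℝ) < 1 + b n := by linarith [hbn n]
    have hfa : (1:ℝ) / ((1 + ‖latt n - x‖) ^ 2 * (1 + ‖latt n - y‖) ^ 2)
        = 1/((1+a n)^2 * (1+b n)^2) := by rw [ha, hb]
    rw [hfa]
    by_cases hca : a n ≤ d/2
    · have hcb : d/2 ≤ b n := by linarith [htri n]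
      have hbd : 1 + d ≤ 2*(1+b n) := by linarith
      have key : 1/((1+a n)^2 * (1+b n)^2) ≤ G1 n := by
        rw [hG1]; beta_reduce; rw [if_pos hca]
        exact helper_G1 (a n) (b n) d (han n) (hbn n) hd0 hbd
      have := hG2nn n; have := hG3nn n; have := hG4nn n
      linarith
    · by_cases hcb : b n ≤ d/2
      · have hca' : d/2 ≤ a n := by linarith [htri n]
        have had : 1 + d ≤ 2*(1+a n) := by linarith
        have key : 1/((1+a n)^2 * (1+b n)^2) ≤ G2 n := by
          rw [hG2]; beta_reduce; rw [if_pos hcb]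
          have := helper_G1 (b n) (a n) d (hbn n) (han n) hd0 had
          calc 1/((1+a n)^2 * (1+b n)^2) = 1/((1+b n)^2 * (1+a n)^2) := by ring_nf
            _ ≤ _ := this
        have := hG1nn n; have := hG3nn n; have := hG4nn n
        linarith
      · have key : 1/((1+a n)^2 * (1+b n)^2) ≤ G3 n + G4 n := by
          rw [hG3, hG4]; beta_reduce; rw [if_pos hca, if_pos hcb]
          exact helper_G3 (a n) (b n) (han n) (hbn n)
        have := hG1nn n; have := hG2nn n
        linarith
  have hsum1 : ∑ n ∈ s, (1:ℝ) / ((1 + ‖latt n - x‖) ^ 2 * (1 + ‖latt n - y‖) ^ 2)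
      ≤ ∑ n ∈ s, (G1 n + G2 n + G3 n + G4 n) := Finset.sum_le_sum pointwise
  have hsplit : ∑ n ∈ s, (G1 n + G2 n + G3 n + G4 n)
      = ∑ n ∈ s, G1 n + ∑ n ∈ s, G2 n + ∑ n ∈ s, G3 n + ∑ n ∈ s, G4 n := by
    rw [Finset.sum_add_distrib, Finset.sum_add_distrib, Finset.sum_add_distrib]
  have hlogmono : Real.log (Real.exp 1 + d/2) ≤ L := by
    rw [hL]
    apply Real.log_le_log (by positivity)
    linarith
  have hlogpos : 0 < Real.log (Real.exp 1 + d/2) := by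
    calc (0:ℝ) < 1 := one_pos
      _ = Real.log (Real.exp 1) := (Real.log_exp 1).symm
      _ ≤ Real.log (Real.exp 1 + d/2) := Real.log_le_log (Real.exp_pos 1) (by linarith)
  have hdd : (1+d)^2 ≤ 4*(1+d/2)^2 := by nlinarith
  have hdpos : (0:ℝ) < (1+d)^2 := by positivity
  -- G1 bound
  have bG1 : ∑ n ∈ s, G1 n ≤ 4096 * L / (1+d)^2 := by
    have e : ∑ n ∈ s, G1 n
        = ∑ n ∈ s.filter (fun n => a n ≤ d/2), 4/(1+d)^2 * (1/(1+a n)^2) := by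
      rw [hG1, Finset.sum_filter]
    rw [e, ← Finset.mul_sum]
    have hmem : ∀ n ∈ s.filter (fun n => a n ≤ d/2), ‖latt n - x‖ ≤ d/2 := by
      intro n hn
      exact (Finset.mem_filter.mp hn).2
    have hPA := P_A (s.filter (fun n => a n ≤ d/2)) x (d/2) (by linarith) hmem
    have ePA : ∑ n ∈ s.filter (fun n => a n ≤ d/2), 1/(1+a n)^2
        = ∑ n ∈ s.filter (fun n => a n ≤ d/2), 1/(1+‖latt n - x‖)^2 := by
      exact Finset.sum_congr rfl (fun n _ => by rw [ha])
    rw [ePA]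
    calc 4/(1+d)^2 * ∑ n ∈ s.filter (fun n => a n ≤ d/2), 1/(1+‖latt n - x‖)^2
        ≤ 4/(1+d)^2 * (1024 * Real.log (Real.exp 1 + d/2)) := by
          apply mul_le_mul_of_nonneg_left hPA (by positivity)
      _ ≤ 4/(1+d)^2 * (1024 * L) := by
          apply mul_le_mul_of_nonneg_left _ (by positivity)
          nlinarith
      _ = 4096 * L / (1+d)^2 := by field_simp; ring
  have bG2 : ∑ n ∈ s, G2 n ≤ 4096 * L / (1+d)^2 := by
    have e : ∑ n ∈ s, G2 n
        = ∑ n ∈ s.filter (fun n => b n ≤ d/2), 4/(1+d)^2 * (1/(1+b n)^2) := by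
      rw [hG2, Finset.sum_filter]
    rw [e, ← Finset.mul_sum]
    have hmem : ∀ n ∈ s.filter (fun n => b n ≤ d/2), ‖latt n - y‖ ≤ d/2 := by
      intro n hn
      exact (Finset.mem_filter.mp hn).2
    have hPA := P_A (s.filter (fun n => b n ≤ d/2)) y (d/2) (by linarith) hmem
    have ePA : ∑ n ∈ s.filter (fun n => b n ≤ d/2), 1/(1+b n)^2
        = ∑ n ∈ s.filter (fun n => b n ≤ d/2), 1/(1+‖latt n - y‖)^2 := by
      exact Finset.sum_congr rfl (fun n _ => by rw [hb])
    rw [ePA]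
    calc 4/(1+d)^2 * ∑ n ∈ s.filter (fun n => b n ≤ d/2), 1/(1+‖latt n - y‖)^2
        ≤ 4/(1+d)^2 * (1024 * Real.log (Real.exp 1 + d/2)) := by
          apply mul_le_mul_of_nonneg_left hPA (by positivity)
      _ ≤ 4/(1+d)^2 * (1024 * L) := by
          apply mul_le_mul_of_nonneg_left _ (by positivity)
          nlinarith
      _ = 4096 * L / (1+d)^2 := by field_simp; ring
  have bG3 : ∑ n ∈ s, G3 n ≤ 131072 * L / (1+d)^2 := by
    have e : ∑ n ∈ s, G3 n
        = ∑ n ∈ s.filter (fun n => ¬(a n ≤ d/2)), (1/2) * (1/(1+a n)^4) := by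
      rw [hG3, Finset.sum_filter]
    rw [e, ← Finset.mul_sum]
    have hmem : ∀ n ∈ s.filter (fun n => ¬(a n ≤ d/2)), d/2 ≤ ‖latt n - x‖ := by
      intro n hn
      exact le_of_lt (not_le.mp (Finset.mem_filter.mp hn).2)
    have hPB := P_B (s.filter (fun n => ¬(a n ≤ d/2))) x (d/2) (by linarith) hmem
    have ePB : ∑ n ∈ s.filter (fun n => ¬(a n ≤ d/2)), 1/(1+a n)^4
        = ∑ n ∈ s.filter (fun n => ¬(a n ≤ d/2)), 1/(1+‖latt n - x‖)^4 := by
      exact Finset.sum_congr rfl (fun n _ => by rw [ha])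
    rw [ePB]
    have h1 : 65536/(1+d/2)^2 ≤ 262144/(1+d)^2 := by
      rw [div_le_div_iff₀ (by positivity) (by positivity)]
      nlinarith
    calc (1/2) * ∑ n ∈ s.filter (fun n => ¬(a n ≤ d/2)), 1/(1+‖latt n - x‖)^4
        ≤ (1/2) * (65536/(1+d/2)^2) := by
          apply mul_le_mul_of_nonneg_left hPB (by norm_num)
      _ ≤ (1/2) * (262144/(1+d)^2) := by linarith
      _ = 131072 / (1+d)^2 := by ring
      _ ≤ 131072 * L / (1+d)^2 := by
          gcongr
          nlinarith
  have bG4 : ∑ n ∈ s, G4 n ≤ 131072 * L / (1+d)^2 := by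
    have e : ∑ n ∈ s, G4 n
        = ∑ n ∈ s.filter (fun n => ¬(b n ≤ d/2)), (1/2) * (1/(1+b n)^4) := by
      rw [hG4, Finset.sum_filter]
    rw [e, ← Finset.mul_sum]
    have hmem : ∀ n ∈ s.filter (fun n => ¬(b n ≤ d/2)), d/2 ≤ ‖latt n - y‖ := by
      intro n hn
      exact le_of_lt (not_le.mp (Finset.mem_filter.mp hn).2)
    have hPB := P_B (s.filter (fun n => ¬(b n ≤ d/2))) y (d/2) (by linarith) hmem
    have ePB : ∑ n ∈ s.filter (fun n => ¬(b n ≤ d/2)), 1/(1+b n)^4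
        = ∑ n ∈ s.filter (fun n => ¬(b n ≤ d/2)), 1/(1+‖latt n - y‖)^4 := by
      exact Finset.sum_congr rfl (fun n _ => by rw [hb])
    rw [ePB]
    have h1 : 65536/(1+d/2)^2 ≤ 262144/(1+d)^2 := by
      rw [div_le_div_iff₀ (by positivity) (by positivity)]
      nlinarith
    calc (1/2) * ∑ n ∈ s.filter (fun n => ¬(b n ≤ d/2)), 1/(1+‖latt n - y‖)^4
        ≤ (1/2) * (65536/(1+d/2)^2) := by
          apply mul_le_mul_of_nonneg_left hPB (by norm_num)
      _ ≤ (1/2) * (262144/(1+d)^2) := by linarith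
      _ = 131072 / (1+d)^2 := by ring
      _ ≤ 131072 * L / (1+d)^2 := by
          gcongr
          nlinarith
  have final1 : ∑ n ∈ s, (1:ℝ) / ((1 + ‖latt n - x‖) ^ 2 * (1 + ‖latt n - y‖) ^ 2)
      ≤ 270336 * L / (1+d)^2 := by
    calc ∑ n ∈ s, (1:ℝ) / ((1 + ‖latt n - x‖) ^ 2 * (1 + ‖latt n - y‖) ^ 2)
        ≤ ∑ n ∈ s, (G1 n + G2 n + G3 n + G4 n) := hsum1
      _ = ∑ n ∈ s, G1 n + ∑ n ∈ s, G2 n + ∑ n ∈ s, G3 n + ∑ n ∈ s, G4 n := hsplit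
      _ ≤ 4096 * L / (1+d)^2 + 4096 * L / (1+d)^2 + 131072 * L / (1+d)^2
          + 131072 * L / (1+d)^2 := by linarith
      _ = 270336 * L / (1+d)^2 := by ring
  calc ∑ n ∈ s, (1:ℝ) / ((1 + ‖latt n - x‖) ^ 2 * (1 + ‖latt n - y‖) ^ 2)
      ≤ 270336 * L / (1+d)^2 := final1
    _ ≤ 270336 * L / (1 + d^2) := by
        gcongr
        nlinarith
end

section
/- Covariance region estimate: there exists C such that for all x, y ∈ R^2 with |x| ≤ |y|, Σ_{n ∈ Z^2, |n| ≤ |x|/2} 1/((1+|x-n|)(1+|y-n|)(1+|n|)^2) ≤ C ln(e+|x|) / ((1+|x|)(1+|y|)). -/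
open MeasureTheory Real Filter

lemma latt_norm (n : ℤ × ℤ) : ‖latt n‖ = Real.sqrt ((n.1:ℝ)^2 + (n.2:ℝ)^2) := by
  rw [latt, EuclideanSpace.norm_eq, Fin.sum_univ_two]
  simp [Real.norm_eq_abs, sq_abs]

lemma abs_fst_le (n : ℤ × ℤ) : |(n.1:ℝ)| ≤ ‖latt n‖ := by
  rw [latt_norm, ← Real.sqrt_sq_eq_abs]
  exact Real.sqrt_le_sqrt (by nlinarith [sq_nonneg ((n.2:ℝ))])

lemma abs_snd_le (n : ℤ × ℤ) : |(n.2:ℝ)| ≤ ‖latt n‖ := by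
  rw [latt_norm, ← Real.sqrt_sq_eq_abs]
  exact Real.sqrt_le_sqrt (by nlinarith [sq_nonneg ((n.1:ℝ))])

lemma max_le_norm (n : ℤ × ℤ) : ((max n.1.natAbs n.2.natAbs : ℕ) : ℝ) ≤ ‖latt n‖ := by
  have h1 := abs_fst_le n
  have h2 := abs_snd_le n
  rw [Nat.cast_max]
  rw [max_le_iff]
  constructor
  · calc ((n.1.natAbs : ℕ) : ℝ) = |(n.1:ℝ)| := by
          push_cast [Nat.cast_natAbs]; ring
       _ ≤ _ := h1
  · calc ((n.2.natAbs : ℕ) : ℝ) = |(n.2:ℝ)| := by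
          push_cast [Nat.cast_natAbs]; ring
       _ ≤ _ := h2

/-- The box of lattice points possibly within radius `R`. -/
noncomputable def box (R : ℝ) : Finset (ℤ × ℤ) :=
  Finset.Icc (-(⌊R⌋₊:ℤ)) ⌊R⌋₊ ×ˢ Finset.Icc (-(⌊R⌋₊:ℤ)) ⌊R⌋₊

lemma mem_box {R : ℝ} {n : ℤ × ℤ} (h : ‖latt n‖ ≤ R) : n ∈ box R := by
  have h1 : (n.1.natAbs : ℝ) ≤ R := by
    calc (n.1.natAbs : ℝ) = |(n.1:ℝ)| := by push_cast [Nat.cast_natAbs]; ring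
      _ ≤ ‖latt n‖ := abs_fst_le n
      _ ≤ R := h
  have h2 : (n.2.natAbs : ℝ) ≤ R := by
    calc (n.2.natAbs : ℝ) = |(n.2:ℝ)| := by push_cast [Nat.cast_natAbs]; ring
      _ ≤ ‖latt n‖ := abs_snd_le n
      _ ≤ R := h
  have h1' : n.1.natAbs ≤ ⌊R⌋₊ := Nat.le_floor h1
  have h2' : n.2.natAbs ≤ ⌊R⌋₊ := Nat.le_floor h2
  simp only [box, Finset.mem_product, Finset.mem_Icc]
  omega

lemma latticeSum_le (R : ℝ) (hR : 0 ≤ R) :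
    (∑' n : ℤ × ℤ, if ‖latt n‖ ≤ R then 1/(1+‖latt n‖)^2 else 0)
      ≤ 24 * Real.log (Real.exp 1 + R) := by
  set N := ⌊R⌋₊ with hN
  set M : ℤ × ℤ → ℕ := fun n => max n.1.natAbs n.2.natAbs with hM
  have h0 : ∀ n ∉ box R, (if ‖latt n‖ ≤ R then 1/(1+‖latt n‖)^2 else (0:ℝ)) = 0 := by
    intro n hn
    rw [if_neg]
    intro h
    exact hn (mem_box h)
  rw [tsum_eq_sum h0]
  have step1 : ∑ n ∈ box R, (if ‖latt n‖ ≤ R then 1/(1+‖latt n‖)^2 else (0:ℝ))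
      ≤ ∑ n ∈ box R, 1/(1+((M n : ℕ):ℝ))^2 := by
    apply Finset.sum_le_sum
    intro n _
    split_ifs with h
    · apply one_div_le_one_div_of_le
      · positivity
      · nlinarith [max_le_norm n, norm_nonneg (latt n), (Nat.cast_nonneg (M n) : (0:ℝ) ≤ _)]
    · positivity
  refine step1.trans ?_
  have hmap : ∀ n ∈ box R, M n ∈ Finset.range (N+1) := by
    intro n hn
    simp only [box, Finset.mem_product, Finset.mem_Icc] at hn
    simp only [Finset.mem_range, hM]
    omega
  rw [← Finset.sum_fiberwise_of_maps_to hmap (fun n => 1/(1+((M n : ℕ):ℝ))^2)]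
  have card_bd : ∀ k : ℕ, ((box R).filter (fun n => M n = k)).card ≤ 12 * (k + 1) := by
    intro k
    have hsub : (box R).filter (fun n => M n = k) ⊆
        (({-(k:ℤ), (k:ℤ)} : Finset ℤ) ×ˢ Finset.Icc (-(k:ℤ)) k) ∪
        (Finset.Icc (-(k:ℤ)) k ×ˢ ({-(k:ℤ), (k:ℤ)} : Finset ℤ)) := by
      intro n hn
      simp only [Finset.mem_filter, hM] at hn
      simp only [Finset.mem_union, Finset.mem_product, Finset.mem_Icc, Finset.mem_insert,
        Finset.mem_singleton]
      omega
    calc _ ≤ _ := Finset.card_le_card hsub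
      _ ≤ (({-(k:ℤ), (k:ℤ)} : Finset ℤ) ×ˢ Finset.Icc (-(k:ℤ)) k).card +
          (Finset.Icc (-(k:ℤ)) k ×ˢ ({-(k:ℤ), (k:ℤ)} : Finset ℤ)).card :=
        Finset.card_union_le _ _
      _ ≤ 12 * (k + 1) := by
        rw [Finset.card_product, Finset.card_product, Int.card_Icc]
        have hc : ({-(k:ℤ), (k:ℤ)} : Finset ℤ).card ≤ 2 :=
          (Finset.card_insert_le _ _).trans (by simp)
        have ht : ((k:ℤ) + 1 - -(k:ℤ)).toNat = 2*k+1 := by omega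
        rw [ht]
        nlinarith
  have step2 : ∑ k ∈ Finset.range (N+1), ∑ n ∈ (box R).filter (fun n => M n = k),
        1/(1+((M n : ℕ):ℝ))^2
      ≤ ∑ k ∈ Finset.range (N+1), 12/(1+(k:ℝ)) := by
    apply Finset.sum_le_sum
    intro k _
    have hinner : ∑ n ∈ (box R).filter (fun n => M n = k), 1/(1+((M n : ℕ):ℝ))^2
        = ((box R).filter (fun n => M n = k)).card • (1/(1+(k:ℝ))^2) := by
      rw [← Finset.sum_const]
      apply Finset.sum_congr rfl
      intro n hn
      simp only [Finset.mem_filter] at hn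
      rw [hn.2]
    rw [hinner, nsmul_eq_mul]
    have hpos : (0:ℝ) < 1 + (k:ℝ) := by positivity
    calc (((box R).filter (fun n => M n = k)).card : ℝ) * (1/(1+(k:ℝ))^2)
        ≤ (12 * ((k:ℝ)+1)) * (1/(1+(k:ℝ))^2) := by
          apply mul_le_mul_of_nonneg_right _ (by positivity)
          calc (((box R).filter (fun n => M n = k)).card : ℝ)
              ≤ ((12 * (k+1) : ℕ) : ℝ) := Nat.cast_le.mpr (card_bd k)
            _ = 12 * ((k:ℝ)+1) := by push_cast; ring
      _ = 12/(1+(k:ℝ)) := by field_simp; ring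
  refine step2.trans ?_
  have hharm : ∑ k ∈ Finset.range (N+1), 12/(1+(k:ℝ)) = 12 * ((harmonic (N+1) : ℚ) : ℝ) := by
    rw [harmonic]
    push_cast
    rw [Finset.mul_sum]
    apply Finset.sum_congr rfl
    intro k _
    rw [add_comm (k:ℝ) 1, div_eq_mul_inv]
  rw [hharm]
  have hlog1 : (1:ℝ) ≤ Real.log (Real.exp 1 + R) := by
    have h := Real.log_le_log (Real.exp_pos 1) (by linarith : Real.exp 1 ≤ Real.exp 1 + R)
    rwa [Real.log_exp] at h
  have hlog2 : Real.log ((N:ℝ)+1) ≤ Real.log (Real.exp 1 + R) := by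
    apply Real.log_le_log (by positivity)
    have h1 : (N:ℝ) ≤ R := Nat.floor_le hR
    have he : (1:ℝ) ≤ Real.exp 1 := by
      have := Real.add_one_le_exp (1:ℝ); linarith
    linarith
  have := harmonic_le_one_add_log (N+1)
  push_cast at this
  linarith

theorem covariance_region_A1_estimate :
    ∃ C : ℝ, ∀ x y : E2, ‖x‖ ≤ ‖y‖ →
      (∑' n : ℤ × ℤ,
          if ‖latt n‖ ≤ ‖x‖ / 2 then
            1 / ((1 + ‖x - latt n‖) * (1 + ‖y - latt n‖) * (1 + ‖latt n‖) ^ 2)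
          else 0) ≤
        C * Real.log (Real.exp 1 + ‖x‖) / ((1 + ‖x‖) * (1 + ‖y‖)) := by
  refine ⟨96, fun x y hxy => ?_⟩
  set R := ‖x‖ / 2 with hRdef
  have hR : 0 ≤ R := by positivity
  set X := 1 + ‖x‖ with hXdef
  set Y := 1 + ‖y‖ with hYdef
  have hX : 0 < X := by have := norm_nonneg x; rw [hXdef]; linarith
  have hY : 0 < Y := by have := norm_nonneg y; rw [hYdef]; linarith
  set F : ℤ × ℤ → ℝ := fun n =>
    if ‖latt n‖ ≤ R then
      1 / ((1 + ‖x - latt n‖) * (1 + ‖y - latt n‖) * (1 + ‖latt n‖) ^ 2)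
    else 0 with hF
  set G : ℤ × ℤ → ℝ := fun n => if ‖latt n‖ ≤ R then 1/(1+‖latt n‖)^2 else 0 with hG
  have hF0 : ∀ n ∉ box R, F n = 0 := by
    intro n hn
    rw [hF]
    simp only
    rw [if_neg (fun h => hn (mem_box h))]
  have hB0 : ∀ n ∉ box R, (4/(X*Y)) * G n = 0 := by
    intro n hn
    rw [hG]
    simp only
    rw [if_neg (fun h => hn (mem_box h)), mul_zero]
  have hsF : Summable F := summable_of_ne_finset_zero hF0
  have hsB : Summable (fun n => (4/(X*Y)) * G n) := summable_of_ne_finset_zero hB0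
  have hFG : ∀ n, F n ≤ (4/(X*Y)) * G n := by
    intro n
    rw [hF, hG]
    simp only
    by_cases h : ‖latt n‖ ≤ R
    · rw [if_pos h, if_pos h]
      have hx2 : ‖x‖/2 ≤ ‖x - latt n‖ := by
        have := norm_sub_norm_le x (latt n); rw [hRdef] at h; linarith
      have hy2 : ‖y‖/2 ≤ ‖y - latt n‖ := by
        have := norm_sub_norm_le y (latt n); rw [hRdef] at h; linarith
      set A := 1 + ‖x - latt n‖ with hA
      set B := 1 + ‖y - latt n‖ with hB
      have hApos : 0 < A := by have := norm_nonneg (x - latt n); rw [hA]; linarith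
      have hBpos : 0 < B := by have := norm_nonneg (y - latt n); rw [hB]; linarith
      have hC2 : (0:ℝ) < (1+‖latt n‖)^2 := by positivity
      have hXA : X ≤ 2*A := by rw [hXdef, hA]; linarith
      have hYB : Y ≤ 2*B := by rw [hYdef, hB]; linarith
      have hXY : X*Y ≤ 4*(A*B) := by nlinarith
      have heq : 4/(X*Y) * (1/((1+‖latt n‖)^2)) = 4/((X*Y)*(1+‖latt n‖)^2) := by
        rw [div_mul_div_comm, mul_one]
      rw [heq, div_le_div_iff₀ (by positivity) (by positivity)]
      nlinarith [mul_le_mul_of_nonneg_right hXY (le_of_lt hC2)]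
    · rw [if_neg h, if_neg h, mul_zero]
  calc (∑' n, F n) ≤ ∑' n, (4/(X*Y)) * G n := Summable.tsum_le_tsum hFG hsF hsB
    _ = (4/(X*Y)) * ∑' n, G n := tsum_mul_left
    _ ≤ (4/(X*Y)) * (24 * Real.log (Real.exp 1 + R)) := by
        apply mul_le_mul_of_nonneg_left (latticeSum_le R hR) (by positivity)
    _ ≤ 96 * Real.log (Real.exp 1 + ‖x‖) / (X*Y) := by
        have hL : Real.log (Real.exp 1 + R) ≤ Real.log (Real.exp 1 + ‖x‖) := by
          apply Real.log_le_log (by positivity)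
          rw [hRdef]
          have := norm_nonneg x; linarith
        have heq : 4/(X*Y) * (24 * Real.log (Real.exp 1 + R))
            = 96 * Real.log (Real.exp 1 + R) / (X*Y) := by ring
        rw [heq]
        gcongr
end
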